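/- arXiv:1705.03073 — 11 statements merged into one kernel-verified Lean document; each statement's English description precedes it below -/
import Mathlib

section
/- Let m > 0, X > 0, let K : [0,X]×[0,X] → ℝ be continuous and positive, and let y : [0,X] → ℝ be a continuous nonnegative solution of y(x)^{m+1} = ∫_0^x K(x,t) y(t) dt for all x ∈ [0,X]. Fix N ∈ ℕ, N ≥ 2, set h = X/N and x_n = n·h, let w_{n,i} > 0 be quadrature weights, and let (y_n)_{n≥1} be the nonnegative sequence defined by a starting value y_1 ≥ 0 and y_n = (h · ∑_{i=1}^{n-1} w_{n,i} K(x_n,x_i) y_i)^{1/(m+1)} for 2 ≤ n ≤ N. Define the local consistency errors δ_n := ∫_0^{x_n} K(x_n,t) y(t) dt − h · ∑_{i=1}^{n-1} w_{n,i} K(x_n,x_i) y(x_i). If δ_n ≥ 0 for all n = 1,…,N and y(h) ≥ y_1, then y(n·h) ≥ y_n for all n = 1,…,N. -/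
open Real Set Filter intervalIntegral

/-- monotone comparison between the exact solution and the explicit
finite-difference scheme when all local consistency errors are nonnegative. -/
theorem stmt0
    (m X : ℝ) (hm : 0 < m) (hX : 0 < X)
    (K : ℝ → ℝ → ℝ)
    (hKcont : ContinuousOn (fun p : ℝ × ℝ => K p.1 p.2) (Set.Icc 0 X ×ˢ Set.Icc 0 X))
    (hKpos : ∀ x ∈ Set.Icc (0 : ℝ) X, ∀ t ∈ Set.Icc (0 : ℝ) X, 0 < K x t)
    (y : ℝ → ℝ)
    (hycont : ContinuousOn y (Set.Icc 0 X))
    (hynonneg : ∀ x ∈ Set.Icc (0 : ℝ) X, 0 ≤ y x)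
    (hsol : ∀ x ∈ Set.Icc (0 : ℝ) X, y x ^ (m + 1) = ∫ t in (0 : ℝ)..x, K x t * y t)
    (N : ℕ) (hN : 2 ≤ N)
    (h : ℝ) (hh : h = X / N)
    (w : ℕ → ℕ → ℝ)
    (hw : ∀ n i : ℕ, 0 < w n i)
    (yd : ℕ → ℝ)
    (hyd1 : 0 ≤ yd 1)
    (hscheme : ∀ n : ℕ, 2 ≤ n → n ≤ N →
      yd n = (h * ∑ i ∈ Finset.Ico 1 n, w n i * K ((n : ℝ) * h) ((i : ℝ) * h) * yd i)
        ^ (1 / (m + 1)))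
    (hδ : ∀ n : ℕ, 1 ≤ n → n ≤ N →
      0 ≤ (∫ t in (0 : ℝ)..((n : ℝ) * h), K ((n : ℝ) * h) t * y t)
        - h * ∑ i ∈ Finset.Ico 1 n, w n i * K ((n : ℝ) * h) ((i : ℝ) * h) * y ((i : ℝ) * h))
    (hinit : yd 1 ≤ y h) :
    ∀ n : ℕ, 1 ≤ n → n ≤ N → yd n ≤ y ((n : ℝ) * h) := by

  have hN0 : (0:ℝ) < N := by exact_mod_cast lt_of_lt_of_le (by norm_num) hN
  have hh0 : 0 < h := by rw [hh]; positivity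
  have hx : ∀ i : ℕ, i ≤ N → (i : ℝ) * h ∈ Set.Icc (0:ℝ) X := by
    intro i hi
    constructor
    · positivity
    · rw [hh]
      have hiN : (i:ℝ) ≤ N := Nat.cast_le.mpr hi
      calc (i:ℝ) * (X / N) ≤ (N:ℝ) * (X / N) := by gcongr
        _ = X := by field_simp
  have key : ∀ n : ℕ, 1 ≤ n → n ≤ N → 0 ≤ yd n ∧ yd n ≤ y ((n:ℝ)*h) := by
    intro n
    induction n using Nat.strong_induction_on with
    | _ n ih =>
      intro h1 hnN
      rcases eq_or_lt_of_le h1 with h1 | h1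
      · rw [← h1]
        refine ⟨hyd1, ?_⟩
        simpa using hinit
      · have h2 : 2 ≤ n := h1
        have hnX := hx n hnN
        have hyn : 0 ≤ y ((n:ℝ)*h) := hynonneg _ hnX
        have hterm : ∀ i ∈ Finset.Ico 1 n,
            0 ≤ w n i * K ((n:ℝ)*h) ((i:ℝ)*h) ∧
            0 ≤ yd i ∧ yd i ≤ y ((i:ℝ)*h) := by
          intro i hi
          obtain ⟨hi1, hin⟩ := Finset.mem_Ico.mp hi
          have hiN : i ≤ N := le_of_lt (lt_of_lt_of_le hin hnN)
          obtain ⟨ha, hb⟩ := ih i hin hi1 hiN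
          exact ⟨le_of_lt (mul_pos (hw n i) (hKpos _ hnX _ (hx i hiN))), ha, hb⟩
        set A := h * ∑ i ∈ Finset.Ico 1 n, w n i * K ((n:ℝ)*h) ((i:ℝ)*h) * yd i with hA
        have hA0 : 0 ≤ A := by
          apply mul_nonneg hh0.le
          apply Finset.sum_nonneg
          intro i hi
          obtain ⟨ha, hb, _⟩ := hterm i hi
          exact mul_nonneg ha hb
        have hAle : A ≤ h * ∑ i ∈ Finset.Ico 1 n, w n i * K ((n:ℝ)*h) ((i:ℝ)*h) * y ((i:ℝ)*h) := by
          apply mul_le_mul_of_nonneg_left _ hh0.le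
          apply Finset.sum_le_sum
          intro i hi
          obtain ⟨ha, _, hc⟩ := hterm i hi
          exact mul_le_mul_of_nonneg_left hc ha
        have hint := hδ n h1.le hnN
        have heq := hsol _ hnX
        have hAfin : A ≤ y ((n:ℝ)*h) ^ (m + 1) := by
          rw [heq]; linarith
        rw [hscheme n h2 hnN, ← hA]
        constructor
        · exact Real.rpow_nonneg hA0 _
        · have hstep : A ^ (1/(m+1)) ≤ (y ((n:ℝ)*h) ^ (m+1)) ^ (1/(m+1)) :=
            Real.rpow_le_rpow hA0 hAfin (by positivity)
          have hm1 : (m + 1) * (1/(m+1)) = 1 := by field_simp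
          calc A ^ (1/(m+1)) ≤ (y ((n:ℝ)*h) ^ (m+1)) ^ (1/(m+1)) := hstep
            _ = y ((n:ℝ)*h) ^ ((m+1) * (1/(m+1))) := (Real.rpow_mul hyn _ _).symm
            _ = y ((n:ℝ)*h) := by rw [hm1, Real.rpow_one]
  intro n h1 h2
  exact (key n h1 h2).2
end

section
/- Let m > 0, X > 0, let K : [0,X]×[0,X] → ℝ be continuous and positive, and let y : [0,X] → ℝ be a continuous nonnegative solution of y(x)^{m+1} = ∫_0^x K(x,t) y(t) dt for all x ∈ [0,X]. Fix N ∈ ℕ, N ≥ 2, set h = X/N and x_n = n·h, let w_{n,i} > 0 be quadrature weights, and let (y_n)_{n≥1} be the nonnegative sequence defined by a starting value y_1 ≥ 0 and y_n = (h · ∑_{i=1}^{n-1} w_{n,i} K(x_n,x_i) y_i)^{1/(m+1)} for 2 ≤ n ≤ N. Define the local consistency errors δ_n := ∫_0^{x_n} K(x_n,t) y(t) dt − h · ∑_{i=1}^{n-1} w_{n,i} K(x_n,x_i) y(x_i). If δ_n ≤ 0 for all n = 1,…,N and y(h) ≤ y_1, then y(n·h) ≤ y_n for all n = 1,…,N.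 -/
open Real Set Filter intervalIntegral

/-- monotone comparison between the exact solution and the explicit
finite-difference scheme when all local consistency errors are nonpositive. -/
theorem stmt1
    (m X : ℝ) (hm : 0 < m) (hX : 0 < X)
    (K : ℝ → ℝ → ℝ)
    (hKcont : ContinuousOn (fun p : ℝ × ℝ => K p.1 p.2) (Set.Icc 0 X ×ˢ Set.Icc 0 X))
    (hKpos : ∀ x ∈ Set.Icc (0 : ℝ) X, ∀ t ∈ Set.Icc (0 : ℝ) X, 0 < K x t)
    (y : ℝ → ℝ)
    (hycont : ContinuousOn y (Set.Icc 0 X))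
    (hynonneg : ∀ x ∈ Set.Icc (0 : ℝ) X, 0 ≤ y x)
    (hsol : ∀ x ∈ Set.Icc (0 : ℝ) X, y x ^ (m + 1) = ∫ t in (0 : ℝ)..x, K x t * y t)
    (N : ℕ) (hN : 2 ≤ N)
    (h : ℝ) (hh : h = X / N)
    (w : ℕ → ℕ → ℝ)
    (hw : ∀ n i : ℕ, 0 < w n i)
    (yd : ℕ → ℝ)
    (hyd1 : 0 ≤ yd 1)
    (hscheme : ∀ n : ℕ, 2 ≤ n → n ≤ N →
      yd n = (h * ∑ i ∈ Finset.Ico 1 n, w n i * K ((n : ℝ) * h) ((i : ℝ) * h) * yd i)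
        ^ (1 / (m + 1)))
    (hδ : ∀ n : ℕ, 1 ≤ n → n ≤ N →
      (∫ t in (0 : ℝ)..((n : ℝ) * h), K ((n : ℝ) * h) t * y t)
        - h * ∑ i ∈ Finset.Ico 1 n, w n i * K ((n : ℝ) * h) ((i : ℝ) * h) * y ((i : ℝ) * h) ≤ 0)
    (hinit : y h ≤ yd 1) :
    ∀ n : ℕ, 1 ≤ n → n ≤ N → y ((n : ℝ) * h) ≤ yd n := by
  have hNpos : (0:ℝ) < N := by
    have : (2:ℕ) ≤ N := hN
    exact_mod_cast Nat.lt_of_lt_of_le (by norm_num) this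
  have hh0 : 0 < h := by rw [hh]; positivity
  have hxmem : ∀ k : ℕ, k ≤ N → (k:ℝ) * h ∈ Set.Icc (0:ℝ) X := by
    intro k hk
    constructor
    · positivity
    · have hk' : (k:ℝ) ≤ N := by exact_mod_cast hk
      calc (k:ℝ) * h ≤ (N:ℝ) * h := by
            exact mul_le_mul_of_nonneg_right hk' hh0.le
        _ = X := by rw [hh]; field_simp
  have hm1 : (0:ℝ) < m + 1 := by linarith
  have key : ∀ n : ℕ, 1 ≤ n → n ≤ N → 0 ≤ yd n ∧ y ((n:ℝ) * h) ≤ yd n := by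
    intro n
    induction n using Nat.strong_induction_on with
    | _ n ih =>
      intro h1 hnN
      rcases eq_or_lt_of_le h1 with heq | hlt
      · subst heq
        simp only [Nat.cast_one, one_mul]
        exact ⟨hyd1, hinit⟩
      · have hn2 : 2 ≤ n := hlt
        set xn := (n:ℝ) * h with hxn
        have hxnI : xn ∈ Set.Icc (0:ℝ) X := hxmem n hnN
        have hterm : ∀ i ∈ Finset.Ico 1 n,
            w n i * K xn ((i:ℝ) * h) * y ((i:ℝ) * h) ≤ w n i * K xn ((i:ℝ) * h) * yd i := by
          intro i hi
          rw [Finset.mem_Ico] at hi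
          have hiN : i ≤ N := le_trans (le_of_lt hi.2) hnN
          have hxiI : (i:ℝ) * h ∈ Set.Icc (0:ℝ) X := hxmem i hiN
          have hKnn : 0 ≤ w n i * K xn ((i:ℝ) * h) :=
            le_of_lt (mul_pos (hw n i) (hKpos xn hxnI _ hxiI))
          exact mul_le_mul_of_nonneg_left (ih i hi.2 hi.1 hiN).2 hKnn
        have htermnn : ∀ i ∈ Finset.Ico 1 n,
            0 ≤ w n i * K xn ((i:ℝ) * h) * yd i := by
          intro i hi
          rw [Finset.mem_Ico] at hi
          have hiN : i ≤ N := le_trans (le_of_lt hi.2) hnN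
          have hxiI : (i:ℝ) * h ∈ Set.Icc (0:ℝ) X := hxmem i hiN
          exact mul_nonneg (le_of_lt (mul_pos (hw n i) (hKpos xn hxnI _ hxiI)))
            (ih i hi.2 hi.1 hiN).1
        set S := h * ∑ i ∈ Finset.Ico 1 n, w n i * K xn ((i:ℝ) * h) * yd i with hS
        have hSnn : 0 ≤ S :=
          mul_nonneg hh0.le (Finset.sum_nonneg htermnn)
        have hydn : yd n = S ^ (1 / (m + 1)) := hscheme n hn2 hnN
        have hydnn : 0 ≤ yd n := by rw [hydn]; exact Real.rpow_nonneg hSnn _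
        have hle : y xn ^ (m + 1) ≤ S := by
          have h1' := hδ n h1 hnN
          have h2 := hsol xn hxnI
          have h3 : h * ∑ i ∈ Finset.Ico 1 n, w n i * K xn ((i:ℝ) * h) * y ((i:ℝ) * h) ≤ S :=
            mul_le_mul_of_nonneg_left (Finset.sum_le_sum hterm) hh0.le
          rw [h2]
          linarith
        refine ⟨hydnn, ?_⟩
        rw [hydn]
        have hy0 : 0 ≤ y xn := hynonneg xn hxnI
        have := Real.rpow_le_rpow (Real.rpow_nonneg hy0 _) hle
          (by positivity : (0:ℝ) ≤ 1 / (m + 1))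
        rwa [← Real.rpow_mul hy0, mul_one_div, div_self (ne_of_gt hm1),
          Real.rpow_one] at this
  intro n h1 hnN
  exact (key n h1 hnN).2
end

section
/- Let m, μ, ν, C > 0 and let y : [0,1] → ℝ be a continuous positive function such that y(x)^{m+1} ≥ C · x^μ · ∫_0^x t^ν y(t) dt for all x ∈ [0,1]. Then for all x ∈ [0,1], y(x) ≥ (C · (m/(m+1)) · 1/(1 + ν + μ/(m+1)))^{1/m} · x^{(1+ν+μ)/m}. -/
open Real Set intervalIntegral

/-- Gronwall–Bellman type comparison lemma, lower bound version. -/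
theorem stmt2
    (m μ ν C : ℝ) (hm : 0 < m) (hμ : 0 < μ) (hν : 0 < ν) (hC : 0 < C)
    (y : ℝ → ℝ)
    (hycont : ContinuousOn y (Set.Icc 0 1))
    (hypos : ∀ x ∈ Set.Icc (0 : ℝ) 1, 0 < y x)
    (hineq : ∀ x ∈ Set.Icc (0 : ℝ) 1,
      C * x ^ μ * ∫ t in (0 : ℝ)..x, t ^ ν * y t ≤ y x ^ (m + 1)) :
    ∀ x ∈ Set.Icc (0 : ℝ) 1,
      (C * (m / (m + 1)) * (1 / (1 + ν + μ / (m + 1)))) ^ (1 / m)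
        * x ^ ((1 + ν + μ) / m) ≤ y x := by
  have hm1 : (0:ℝ) < m + 1 := by linarith
  set q : ℝ := 1/(m+1) with hq_def
  set p : ℝ := m/(m+1) with hp_def
  set β : ℝ := 1 + ν + μ/(m+1) with hβ_def
  have hqpos : 0 < q := by positivity
  have hppos : 0 < p := by positivity
  have hβpos : 0 < β := by have : 0 < μ/(m+1) := by positivity
                           simp only [hβ_def]; linarith
  set K : ℝ := C ^ q * p / β with hK_def
  have hKpos : 0 < K := by positivity
  set f : ℝ → ℝ := fun t => t ^ ν * y t with hf_def
  set z : ℝ → ℝ := fun x => ∫ t in (0:ℝ)..x, f t with hz_def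
  -- continuity of f
  have hfcont : ContinuousOn f (Icc 0 1) := by
    apply ContinuousOn.mul _ hycont
    intro t _
    exact (Real.continuousAt_rpow_const t ν (Or.inr hν.le)).continuousWithinAt
  have hfint : ∀ x ∈ Icc (0:ℝ) 1, IntervalIntegrable f MeasureTheory.volume 0 x := by
    intro x hx
    apply (hfcont.mono _).intervalIntegrable
    rw [uIcc_of_le hx.1]
    exact Icc_subset_Icc le_rfl hx.2
  have hfnonneg : ∀ t ∈ Icc (0:ℝ) 1, 0 ≤ f t := by
    intro t ht
    exact mul_nonneg (Real.rpow_nonneg ht.1 ν) (hypos t ht).le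
  -- z is nonneg, positive on (0,1], continuous, with derivative f
  have hznonneg : ∀ x ∈ Icc (0:ℝ) 1, 0 ≤ z x := by
    intro x hx
    apply intervalIntegral.integral_nonneg hx.1
    intro t ht
    exact hfnonneg t ⟨ht.1, ht.2.trans hx.2⟩
  have hzpos : ∀ x ∈ Icc (0:ℝ) 1, 0 < x → 0 < z x := by
    intro x hx hx0
    apply intervalIntegral.intervalIntegral_pos_of_pos_on (hfint x hx) _ hx0
    intro t ht
    have ht' : t ∈ Icc (0:ℝ) 1 := ⟨ht.1.le, ht.2.le.trans hx.2⟩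
    exact mul_pos (Real.rpow_pos_of_pos ht.1 ν) (hypos t ht')
  have hzcont : ContinuousOn z (Icc 0 1) := by
    have := intervalIntegral.continuousOn_primitive_interval
      (f := f) (a := (0:ℝ)) (b := (1:ℝ)) (μ := MeasureTheory.volume) ?_
    · simpa [uIcc_of_le (zero_le_one)] using this
    · rw [uIcc_of_le (zero_le_one)]
      exact hfcont.integrableOn_compact isCompact_Icc
  have hzderiv : ∀ x ∈ Ioo (0:ℝ) 1, HasDerivAt z (f x) x := by
    intro x hx
    have hopen : IsOpen (Ioo (0:ℝ) 1) := isOpen_Ioo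
    have hfcont' : ContinuousOn f (Ioo 0 1) := hfcont.mono Ioo_subset_Icc_self
    have hca : ContinuousAt f x := hfcont'.continuousAt (hopen.mem_nhds hx)
    exact intervalIntegral.integral_hasDerivAt_right
      (hfint x ⟨hx.1.le, hx.2.le⟩)
      (hfcont'.stronglyMeasurableAtFilter hopen x hx) hca
  -- key pointwise bound: y x ≥ (C x^μ z x)^q
  have hy_lower : ∀ x ∈ Icc (0:ℝ) 1, (C * x ^ μ * z x) ^ q ≤ y x := by
    intro x hx
    have hb : 0 ≤ C * x ^ μ * z x :=
      mul_nonneg (mul_nonneg hC.le (Real.rpow_nonneg hx.1 μ)) (hznonneg x hx)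
    have h1 : (C * x ^ μ * z x) ^ q ≤ (y x ^ (m+1)) ^ q :=
      Real.rpow_le_rpow hb (hineq x hx) hqpos.le
    calc (C * x ^ μ * z x) ^ q ≤ (y x ^ (m+1)) ^ q := h1
      _ = y x := by
          rw [← Real.rpow_mul (hypos x hx).le, hq_def]
          rw [mul_one_div, div_self hm1.ne', Real.rpow_one]
  -- expanded form of the lower bound
  have hy_lower' : ∀ x ∈ Icc (0:ℝ) 1,
      C ^ q * x ^ (μ * q) * z x ^ q ≤ y x := by
    intro x hx
    have h := hy_lower x hx
    rwa [Real.mul_rpow (mul_nonneg hC.le (Real.rpow_nonneg hx.1 μ)) (hznonneg x hx),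
      Real.mul_rpow hC.le (Real.rpow_nonneg hx.1 μ),
      ← Real.rpow_mul hx.1] at h
  -- the comparison function g
  set g : ℝ → ℝ := fun x => z x ^ p - K * x ^ β with hg_def
  have hgderiv : ∀ x ∈ Ioo (0:ℝ) 1,
      HasDerivAt g (f x * p * z x ^ (p - 1) - K * (β * x ^ (β - 1))) x := by
    intro x hx
    have hz0 : 0 < z x := hzpos x ⟨hx.1.le, hx.2.le⟩ hx.1
    exact ((hzderiv x hx).rpow_const (Or.inl hz0.ne')).sub
      ((Real.hasDerivAt_rpow_const (p := β) (Or.inl hx.1.ne')).const_mul K)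
  have hgderiv_nonneg : ∀ x ∈ Ioo (0:ℝ) 1,
      0 ≤ f x * p * z x ^ (p - 1) - K * (β * x ^ (β - 1)) := by
    intro x hx
    have hx' : x ∈ Icc (0:ℝ) 1 := ⟨hx.1.le, hx.2.le⟩
    have hz0 : 0 < z x := hzpos x hx' hx.1
    have hzz : z x ^ q * z x ^ (p - 1) = 1 := by
      rw [← Real.rpow_add hz0]
      rw [show q + (p - 1) = 0 by rw [hq_def, hp_def]; field_simp; ring]
      exact Real.rpow_zero _
    have hxx : x ^ ν * x ^ (μ * q) = x ^ (β - 1) := by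
      rw [← Real.rpow_add hx.1]
      congr 1
      rw [hβ_def, hq_def]; ring
    have hKβ : K * β = C ^ q * p := by
      rw [hK_def]; field_simp
    have key : x ^ ν * (C ^ q * x ^ (μ * q) * z x ^ q) * p * z x ^ (p - 1)
        = C ^ q * p * x ^ (β - 1) := by
      rw [← hxx]
      calc x ^ ν * (C ^ q * x ^ (μ * q) * z x ^ q) * p * z x ^ (p - 1)
          = C ^ q * p * (x ^ ν * x ^ (μ * q)) * (z x ^ q * z x ^ (p - 1)) := by ring
        _ = C ^ q * p * (x ^ ν * x ^ (μ * q)) := by rw [hzz, mul_one]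
    have hstep : x ^ ν * (C ^ q * x ^ (μ * q) * z x ^ q) * p * z x ^ (p - 1)
        ≤ x ^ ν * y x * p * z x ^ (p - 1) := by
      have h1 : C ^ q * x ^ (μ * q) * z x ^ q ≤ y x := hy_lower' x hx'
      have h2 : (0:ℝ) ≤ x ^ ν := Real.rpow_nonneg hx.1.le ν
      have h3 : (0:ℝ) ≤ z x ^ (p - 1) := Real.rpow_nonneg hz0.le _
      nlinarith [mul_nonneg (mul_nonneg h2 hppos.le) h3]
    have : K * (β * x ^ (β - 1)) = C ^ q * p * x ^ (β - 1) := by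
      rw [← mul_assoc, hKβ]
    rw [this, hf_def]
    simp only
    nlinarith [key, hstep]
  have hgmono : MonotoneOn g (Icc 0 1) := by
    apply monotoneOn_of_deriv_nonneg (convex_Icc 0 1)
    · apply ContinuousOn.sub
      · exact hzcont.rpow_const (fun x hx => Or.inr hppos.le)
      · exact continuousOn_const.mul (fun x _ =>
          (Real.continuousAt_rpow_const x β (Or.inr hβpos.le)).continuousWithinAt)
    · rw [interior_Icc]
      intro x hx
      exact (hgderiv x hx).differentiableAt.differentiableWithinAt
    · rw [interior_Icc]
      intro x hx
      rw [(hgderiv x hx).deriv]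
      exact hgderiv_nonneg x hx
  have hg0 : g 0 = 0 := by
    have hz0 : z 0 = 0 := intervalIntegral.integral_same
    simp [hg_def, hz0, Real.zero_rpow hppos.ne', Real.zero_rpow hβpos.ne']
  have hzK : ∀ x ∈ Icc (0:ℝ) 1, K * x ^ β ≤ z x ^ p := by
    intro x hx
    have h := hgmono (left_mem_Icc.2 zero_le_one) hx hx.1
    rw [hg0] at h
    simp only [hg_def] at h
    linarith
  have hz_lower : ∀ x ∈ Icc (0:ℝ) 1, (K * x ^ β) ^ (1/p) ≤ z x := by
    intro x hx
    have hb : (0:ℝ) ≤ K * x ^ β := mul_nonneg hKpos.le (Real.rpow_nonneg hx.1 β)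
    have h := Real.rpow_le_rpow hb (hzK x hx) (by positivity : (0:ℝ) ≤ 1/p)
    rwa [← Real.rpow_mul (hznonneg x hx), mul_one_div, div_self hppos.ne',
      Real.rpow_one] at h
  -- conclusion
  intro x hx
  rcases eq_or_lt_of_le hx.1 with hx0 | hx0
  · rw [← hx0, Real.zero_rpow (by positivity : (1+ν+μ)/m ≠ 0), mul_zero]
    exact (hypos 0 (left_mem_Icc.2 zero_le_one)).le
  · -- x > 0
    have hxμ : (0:ℝ) < x ^ μ := Real.rpow_pos_of_pos hx0 μ
    have hKx : (0:ℝ) < (K * x ^ β) ^ (1/p) :=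
      Real.rpow_pos_of_pos (mul_pos hKpos (Real.rpow_pos_of_pos hx0 β)) _
    have step1 : (C * x ^ μ * (K * x ^ β) ^ (1/p)) ^ q ≤ (C * x ^ μ * z x) ^ q := by
      apply Real.rpow_le_rpow (by positivity)
      · exact mul_le_mul_of_nonneg_left (hz_lower x hx) (by positivity)
      · exact hqpos.le
    have step2 := hy_lower x hx
    -- the constant identity
    have key : (C * (m / (m + 1)) * (1 / (1 + ν + μ / (m + 1)))) ^ (1 / m)
        * x ^ ((1 + ν + μ) / m) = (C * x ^ μ * (K * x ^ β) ^ (1/p)) ^ q := by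
      have hL : (0:ℝ) < (C * (m / (m + 1)) * (1 / (1 + ν + μ / (m + 1)))) ^ (1 / m)
          * x ^ ((1 + ν + μ) / m) := by
        apply mul_pos _ (Real.rpow_pos_of_pos hx0 _)
        apply Real.rpow_pos_of_pos
        have : (0:ℝ) < 1 + ν + μ/(m+1) := hβpos
        positivity
      have hR : (0:ℝ) < (C * x ^ μ * (K * x ^ β) ^ (1/p)) ^ q :=
        Real.rpow_pos_of_pos (by positivity) _
      apply Real.log_injOn_pos (mem_Ioi.2 hL) (mem_Ioi.2 hR)
      have hA : (0:ℝ) < C * (m / (m + 1)) * (1 / (1 + ν + μ / (m + 1))) := by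
        have : (0:ℝ) < 1 + ν + μ/(m+1) := hβpos
        positivity
      rw [Real.log_mul (ne_of_gt (Real.rpow_pos_of_pos hA _))
            (ne_of_gt (Real.rpow_pos_of_pos hx0 _)),
          Real.log_rpow hA, Real.log_rpow hx0,
          Real.log_rpow (by positivity : (0:ℝ) < C * x ^ μ * (K * x ^ β) ^ (1/p)),
          Real.log_mul (by positivity : C * x ^ μ ≠ 0) hKx.ne',
          Real.log_mul hC.ne' hxμ.ne',
          Real.log_rpow hx0,
          Real.log_rpow (by positivity : (0:ℝ) < K * x ^ β),
          Real.log_mul hKpos.ne' (ne_of_gt (Real.rpow_pos_of_pos hx0 β)),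
          Real.log_rpow hx0,
          hK_def, Real.log_div (by positivity : C ^ q * p ≠ 0) hβpos.ne',
          Real.log_mul (ne_of_gt (Real.rpow_pos_of_pos hC _)) hppos.ne',
          Real.log_rpow hC,
          show C * (m / (m + 1)) * (1 / (1 + ν + μ / (m + 1)))
            = C * p / β by rw [hp_def, hβ_def]; ring,
          Real.log_div (by positivity : C * p ≠ 0) hβpos.ne',
          Real.log_mul hC.ne' hppos.ne']
      rw [hq_def, hp_def, hβ_def]
      field_simp
      ring
    rw [key]
    exact step1.trans step2
end

section
/- Let m ≥ 1, h > 0, C > 0, ε ≥ 0 with (m+1)/m · ε · h^{−(m+1)/m} ≤ 1, and N ∈ ℕ. Let w_{n,i} > 0 be weights and K_{n,i} ≥ C real numbers for 1 ≤ i < n ≤ N, and suppose the quadrature errors for the function t ↦ t^{1/m} satisfy, for every 2 ≤ n ≤ N, h · ∑_{i=1}^{n-1} w_{n,i} (i·h)^{1/m} ≥ ∫_0^{n·h} t^{1/m} dt − ε_n with ε_n ≤ ε. Let (y_n) be a sequence of nonnegative numbers satisfying y_n^{m+1} = h · ∑_{i=1}^{n-1} w_{n,i} K_{n,i} y_i for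 2 ≤ n ≤ N. If y_1 ≥ (1 − ((m+1)/m) · ε · h^{−(1+1/m)}) · (C · (m/(m+1)) · h)^{1/m}, then for every 2 ≤ n ≤ N, y_n ≥ (1 − ((m+1)/m) · ε · h^{−(1+1/m)}) · (C · (m/(m+1)) · n·h)^{1/m}. -/
open Real Set intervalIntegral

/-- lower bound for the iterates of the explicit scheme
(discrete comparison with the power function `t ^ (1/m)`). -/
theorem stmt5
    (m h C ε : ℝ) (hm : 1 ≤ m) (hh : 0 < h) (hC : 0 < C) (hε : 0 ≤ ε)
    (hsmall : (m + 1) / m * ε * h ^ (-(m + 1) / m) ≤ 1)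
    (N : ℕ)
    (w : ℕ → ℕ → ℝ)
    (hw : ∀ n i : ℕ, 1 ≤ i → i < n → n ≤ N → 0 < w n i)
    (K : ℕ → ℕ → ℝ)
    (hK : ∀ n i : ℕ, 1 ≤ i → i < n → n ≤ N → C ≤ K n i)
    (εn : ℕ → ℝ)
    (hquad : ∀ n : ℕ, 2 ≤ n → n ≤ N →
      (∫ t in (0 : ℝ)..((n : ℝ) * h), t ^ (1 / m)) - εn n
        ≤ h * ∑ i ∈ Finset.Ico 1 n, w n i * ((i : ℝ) * h) ^ (1 / m))
    (hεn : ∀ n : ℕ, 2 ≤ n → n ≤ N → εn n ≤ ε)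
    (y : ℕ → ℝ)
    (hynn : ∀ n : ℕ, 0 ≤ y n)
    (hscheme : ∀ n : ℕ, 2 ≤ n → n ≤ N →
      y n ^ (m + 1) = h * ∑ i ∈ Finset.Ico 1 n, w n i * K n i * y i)
    (hy1 : (1 - (m + 1) / m * ε * h ^ (-(1 + 1 / m))) * (C * (m / (m + 1)) * h) ^ (1 / m)
      ≤ y 1) :
    ∀ n : ℕ, 2 ≤ n → n ≤ N →
      (1 - (m + 1) / m * ε * h ^ (-(1 + 1 / m)))
        * (C * (m / (m + 1)) * ((n : ℝ) * h)) ^ (1 / m) ≤ y n := by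
  have hm0 : 0 < m := lt_of_lt_of_le one_pos hm
  have hm1 : 0 < m + 1 := by linarith
  set A := C * (m / (m + 1)) with hAdef
  have hA : 0 < A := by positivity
  set L := 1 - (m + 1) / m * ε * h ^ (-(1 + 1 / m)) with hLdef
  have hexp : -(m + 1) / m = -(1 + 1 / m) := by field_simp
  have hL0 : 0 ≤ L := by
    have h1 := hsmall
    rw [hexp] at h1
    simp only [hLdef]; linarith
  have hL1 : L ≤ 1 := by
    have h1 : 0 ≤ (m + 1) / m * ε * h ^ (-(1 + 1 / m)) := by positivity
    simp only [hLdef]; linarith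
  have main : ∀ n : ℕ, 1 ≤ n → n ≤ N → L * (A * ((n : ℝ) * h)) ^ (1 / m) ≤ y n := by
    intro n
    induction n using Nat.strong_induction_on with
    | _ n ih =>
      intro h1 hN
      rcases eq_or_lt_of_le h1 with h1' | h2
      · rw [← h1']
        simpa using hy1
      · -- 2 ≤ n
        rcases hL0.eq_or_lt with hL | hL
        · rw [← hL, zero_mul]; exact hynn n
        have hn2 : 2 ≤ n := h2
        have hnR : (1 : ℝ) ≤ (n : ℝ) := by exact_mod_cast h1
        have hnh : 0 < (n : ℝ) * h := by positivity
        have hp : 0 < 1 / m := by positivity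
        -- termwise bound in the sum
        have hterm : ∀ i ∈ Finset.Ico 1 n,
            C * L * A ^ (1 / m) * (w n i * ((i : ℝ) * h) ^ (1 / m))
              ≤ w n i * K n i * y i := by
          intro i hi
          obtain ⟨hi1, hi2⟩ := Finset.mem_Ico.mp hi
          have hwi := hw n i hi1 hi2 hN
          have hKi := hK n i hi1 hi2 hN
          have hyi := ih i hi2 hi1 (le_trans hi2.le hN)
          have hih : (0 : ℝ) ≤ (i : ℝ) * h := by positivity
          have hsplit : (A * ((i : ℝ) * h)) ^ (1 / m)
              = A ^ (1 / m) * ((i : ℝ) * h) ^ (1 / m) := Real.mul_rpow hA.le hih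
          rw [hsplit] at hyi
          have hpos : 0 ≤ L * (A ^ (1 / m) * ((i : ℝ) * h) ^ (1 / m)) := by positivity
          have hmain : C * (L * (A ^ (1 / m) * ((i : ℝ) * h) ^ (1 / m)))
              ≤ K n i * y i := mul_le_mul hKi hyi hpos (le_trans hC.le hKi)
          calc C * L * A ^ (1 / m) * (w n i * ((i : ℝ) * h) ^ (1 / m))
              = w n i * (C * (L * (A ^ (1 / m) * ((i : ℝ) * h) ^ (1 / m)))) := by ring
            _ ≤ w n i * (K n i * y i) := mul_le_mul_of_nonneg_left hmain hwi.le
            _ = w n i * K n i * y i := (mul_assoc _ _ _).symm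
        set S := ∑ i ∈ Finset.Ico 1 n, w n i * ((i : ℝ) * h) ^ (1 / m) with hSdef
        have key1 : C * L * A ^ (1 / m) * (h * S) ≤ y n ^ (m + 1) := by
          rw [hscheme n hn2 hN]
          have hsum := Finset.sum_le_sum hterm
          rw [← Finset.mul_sum] at hsum
          calc C * L * A ^ (1 / m) * (h * S)
              = h * (C * L * A ^ (1 / m) * S) := by ring
            _ ≤ h * ∑ i ∈ Finset.Ico 1 n, w n i * K n i * y i :=
                mul_le_mul_of_nonneg_left hsum hh.le
        -- quadrature lower bound
        have hI : (∫ t in (0 : ℝ)..((n : ℝ) * h), t ^ (1 / m))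
            = ((n : ℝ) * h) ^ (1 / m + 1) * (m / (m + 1)) := by
          rw [integral_rpow (Or.inl (lt_trans (by norm_num : (-1:ℝ) < 0) hp)),
            Real.zero_rpow (by positivity : (0:ℝ) < 1 / m + 1).ne']
          field_simp
          ring
        set B := ((n : ℝ) * h) ^ (1 / m + 1) with hBdef
        have hB : 0 < B := Real.rpow_pos_of_pos hnh _
        have hquad' : B * (m / (m + 1)) - ε ≤ h * S := by
          have hq := hquad n hn2 hN
          have he := hεn n hn2 hN
          rw [hI] at hq
          linarith
        -- ε ≤ (1 - L) * (m/(m+1)) * B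
        have hstep2 : ε ≤ (1 - L) * (m / (m + 1)) * B := by
          have h2' : B = (n : ℝ) ^ (1 / m + 1) * h ^ (1 / m + 1) := by
            rw [hBdef]; exact Real.mul_rpow (Nat.cast_nonneg n) hh.le
          have h3 : h ^ (-(1 + 1 / m)) * h ^ (1 / m + 1) = 1 := by
            rw [← Real.rpow_add hh, show -(1 + 1 / m) + (1 / m + 1) = 0 by ring,
              Real.rpow_zero]
          have h4 : (1 : ℝ) ≤ (n : ℝ) ^ (1 / m + 1) := by
            calc (1 : ℝ) = (1 : ℝ) ^ (1 / m + 1) := (Real.one_rpow _).symm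
              _ ≤ (n : ℝ) ^ (1 / m + 1) :=
                  Real.rpow_le_rpow (by norm_num) hnR (by positivity)
          have h5 : (1 - L) * (m / (m + 1)) * B
              = ε * (h ^ (-(1 + 1 / m)) * h ^ (1 / m + 1)) * (n : ℝ) ^ (1 / m + 1) := by
            rw [hLdef, h2']
            field_simp
            ring
          rw [h5, h3]
          nlinarith
        have key2 : L * ((m / (m + 1)) * B) ≤ B * (m / (m + 1)) - ε := by
          nlinarith
        -- combine
        have key3 : C * L * A ^ (1 / m) * (L * ((m / (m + 1)) * B)) ≤ y n ^ (m + 1) := by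
          have hc : 0 ≤ C * L * A ^ (1 / m) := by positivity
          calc C * L * A ^ (1 / m) * (L * ((m / (m + 1)) * B))
              ≤ C * L * A ^ (1 / m) * (B * (m / (m + 1)) - ε) :=
                mul_le_mul_of_nonneg_left key2 hc
            _ ≤ C * L * A ^ (1 / m) * (h * S) := mul_le_mul_of_nonneg_left hquad' hc
            _ ≤ y n ^ (m + 1) := key1
        -- rewrite LHS of key3 as L^2 * A^(1/m+1) * B
        have hA1 : A ^ (1 / m + 1 : ℝ) = A ^ (1 / m) * A := by
          rw [Real.rpow_add hA, Real.rpow_one]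
        have key4 : L * L * (A ^ (1 / m + 1 : ℝ) * B) ≤ y n ^ (m + 1) := by
          rw [hA1]
          calc L * L * (A ^ (1 / m) * A * B)
              = C * L * A ^ (1 / m) * (L * ((m / (m + 1)) * B)) := by
                rw [hAdef]; ring
            _ ≤ y n ^ (m + 1) := key3
        -- target^(m+1)
        have htgt : (L * (A * ((n : ℝ) * h)) ^ (1 / m)) ^ (m + 1)
            = L ^ (m + 1) * (A ^ (1 / m + 1 : ℝ) * B) := by
          have hb : (0 : ℝ) ≤ (A * ((n : ℝ) * h)) ^ (1 / m) :=
            (Real.rpow_pos_of_pos (by positivity) _).le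
          rw [Real.mul_rpow hL0 hb,
            ← Real.rpow_mul (by positivity : (0:ℝ) ≤ A * ((n : ℝ) * h))]
          rw [show 1 / m * (m + 1) = 1 / m + 1 by field_simp; ring]
          rw [hBdef, Real.mul_rpow hA.le hnh.le]
        have hLpow : L ^ (m + 1 : ℝ) ≤ L * L := by
          have h6 : L ^ (m + 1 : ℝ) ≤ L ^ (2 : ℝ) :=
            Real.rpow_le_rpow_of_exponent_ge hL hL1 (by linarith)
          have h7 : L ^ (2 : ℝ) = L * L := by
            rw [show (2 : ℝ) = ((2 : ℕ) : ℝ) by norm_num, Real.rpow_natCast]; ring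
          rw [h7] at h6; exact h6
        have key5 : (L * (A * ((n : ℝ) * h)) ^ (1 / m)) ^ (m + 1) ≤ y n ^ (m + 1) := by
          rw [htgt]
          have hAB : 0 ≤ A ^ (1 / m + 1 : ℝ) * B := by positivity
          calc L ^ (m + 1) * (A ^ (1 / m + 1 : ℝ) * B)
              ≤ L * L * (A ^ (1 / m + 1 : ℝ) * B) :=
                mul_le_mul_of_nonneg_right hLpow hAB
            _ ≤ y n ^ (m + 1) := key4
        have hlhs : 0 ≤ L * (A * ((n : ℝ) * h)) ^ (1 / m) := by positivity
        exact (Real.rpow_le_rpow_iff hlhs (hynn n) hm1).mp key5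
  intro n hn hN
  exact main n (le_trans one_le_two hn) hN
end

section
/- Let A ≥ 1, B ≥ 0, and let (e_n)_{n≥1} be a sequence of positive real numbers satisfying e_n ≤ (1/n) · (A · ∑_{i=1}^{n-1} e_i + B) for all n ≥ 2. Set M := max{e_1, B}. Then e_n ≤ M / n^{1−A} (equivalently e_n ≤ M · n^{A−1}) for all n ≥ 1. -/
open Real Finset

lemma stmt6_aux {A : ℝ} (hA : 1 ≤ A) {i : ℕ} (hi : 1 ≤ i) :
    A * (i : ℝ) ^ (A - 1) ≤ ((i : ℝ) + 1) ^ A - (i : ℝ) ^ A := by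
  have hi0 : (0 : ℝ) < i := by exact_mod_cast hi
  have hs : (-1 : ℝ) ≤ 1 / i := le_trans (by norm_num) (le_of_lt (by positivity : (0:ℝ) < 1 / i))
  have hb := one_add_mul_self_le_rpow_one_add hs hA
  have h1 : ((i : ℝ)) ^ A * (1 + 1 / i) ^ A = ((i : ℝ) + 1) ^ A := by
    rw [← Real.mul_rpow hi0.le (by positivity)]
    congr 1
    field_simp
  have h2 : ((i : ℝ)) ^ A * (1 + A * (1 / i)) = (i : ℝ) ^ A + A * (i : ℝ) ^ (A - 1) := by
    have : (i : ℝ) ^ (A - 1) = (i : ℝ) ^ A / i := by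
      rw [Real.rpow_sub hi0, Real.rpow_one]
    rw [this]; field_simp
  nlinarith [mul_le_mul_of_nonneg_left hb (Real.rpow_nonneg hi0.le A)]

/-- discrete Gronwall–Bellman lemma, case `A ≥ 1`. -/
theorem stmt6
    (A B : ℝ) (hA : 1 ≤ A) (hB : 0 ≤ B)
    (e : ℕ → ℝ)
    (hpos : ∀ n : ℕ, 1 ≤ n → 0 < e n)
    (hrec : ∀ n : ℕ, 2 ≤ n →
      e n ≤ (1 / (n : ℝ)) * (A * ∑ i ∈ Finset.Ico 1 n, e i + B)) :
    ∀ n : ℕ, 1 ≤ n → e n ≤ max (e 1) B / (n : ℝ) ^ (1 - A) := by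
  set M := max (e 1) B with hM
  have hMe1 : e 1 ≤ M := le_max_left _ _
  have hMB : B ≤ M := le_max_right _ _
  have hM0 : 0 < M := lt_of_lt_of_le (hpos 1 le_rfl) hMe1
  have key : ∀ n : ℕ, 1 ≤ n → e n ≤ M * (n : ℝ) ^ (A - 1) := by
    intro n
    induction n using Nat.strong_induction_on with
    | _ n ih =>
      intro hn
      rcases eq_or_lt_of_le hn with h1 | h2
      · rw [← h1]
        simpa using hMe1
      · have hn0 : (0 : ℝ) < n := by exact_mod_cast lt_of_lt_of_le one_pos hn
        have hsum : A * ∑ i ∈ Finset.Ico 1 n, e i ≤ M * ((n : ℝ) ^ A - 1) := by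
          have h1 : ∑ i ∈ Finset.Ico 1 n, A * e i
              ≤ ∑ i ∈ Finset.Ico 1 n, M * (((i : ℝ) + 1) ^ A - (i : ℝ) ^ A) := by
            apply Finset.sum_le_sum
            intro i hi
            obtain ⟨hi1, hin⟩ := Finset.mem_Ico.mp hi
            have := ih i hin hi1
            have h2 := stmt6_aux hA hi1
            have hA0 : 0 < A := lt_of_lt_of_le one_pos hA
            nlinarith [hM0, Real.rpow_nonneg (le_of_lt (by exact_mod_cast hi1 : (0:ℝ) < i)) (A-1)]
          have h2 : ∑ i ∈ Finset.Ico 1 n, (((i : ℝ) + 1) ^ A - (i : ℝ) ^ A)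
              = (n : ℝ) ^ A - 1 := by
            have := Finset.sum_Ico_eq_sub (fun i : ℕ => ((i : ℝ) + 1) ^ A - (i : ℝ) ^ A)
              (le_of_lt h2)
            rw [this]
            have t1 : ∀ m : ℕ, ∑ i ∈ Finset.range m, (((i : ℝ) + 1) ^ A - (i : ℝ) ^ A)
                = (m : ℝ) ^ A - (0 : ℝ) ^ A := by
              intro m
              have := Finset.sum_range_sub (fun i : ℕ => (i : ℝ) ^ A) m
              simpa using this
            rw [t1, t1]
            norm_num [Real.zero_rpow (by linarith : A ≠ 0), Real.one_rpow]
          calc A * ∑ i ∈ Finset.Ico 1 n, e i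
              = ∑ i ∈ Finset.Ico 1 n, A * e i := by rw [Finset.mul_sum]
            _ ≤ M * ∑ i ∈ Finset.Ico 1 n, (((i : ℝ) + 1) ^ A - (i : ℝ) ^ A) := by
                rw [Finset.mul_sum]; exact h1
            _ = M * ((n : ℝ) ^ A - 1) := by rw [h2]
        have hfin : (1 / (n : ℝ)) * (A * ∑ i ∈ Finset.Ico 1 n, e i + B)
            ≤ M * (n : ℝ) ^ (A - 1) := by
          have hnA : (n : ℝ) ^ (A - 1) = (n : ℝ) ^ A / n := by
            rw [Real.rpow_sub hn0, Real.rpow_one]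
          have h3 : A * ∑ i ∈ Finset.Ico 1 n, e i + B ≤ M * (n : ℝ) ^ A := by
            nlinarith
          calc (1 / (n : ℝ)) * (A * ∑ i ∈ Finset.Ico 1 n, e i + B)
              ≤ (1 / (n : ℝ)) * (M * (n : ℝ) ^ A) := by
                apply mul_le_mul_of_nonneg_left h3 (by positivity)
            _ = M * (n : ℝ) ^ (A - 1) := by rw [hnA]; field_simp
        exact le_trans (hrec n h2) hfin
  intro n hn
  have hn0 : (0 : ℝ) < n := by exact_mod_cast lt_of_lt_of_le one_pos hn
  have : M / (n : ℝ) ^ (1 - A) = M * (n : ℝ) ^ (A - 1) := by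
    rw [div_eq_mul_inv, ← Real.rpow_neg hn0.le]
    ring_nf
  rw [this]
  exact key n hn
end

section
/- Let 0 < A < 1, B ≥ 0, and let (e_n)_{n≥1} be a sequence of positive real numbers satisfying e_n ≤ (1/n) · (A · ∑_{i=1}^{n-1} e_i + B) for all n ≥ 2. Set M := max{e_1, B} / (−A·ζ(1−A)), where ζ denotes the Riemann zeta function (whose value ζ(1−A) at the real point 1−A ∈ (0,1) is real and negative). Then e_n ≤ M / n^{1−A} for all n ≥ 1. -/
open Real Finset

namespace Stmt7Aux

open Filter

lemma hasDerivAt_cpow_real {w : ℂ} (hw : w ≠ 0) {x : ℝ} (hx : 0 < x) :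
    HasDerivAt (fun t : ℝ => (t : ℂ) ^ w) (w * (x : ℂ) ^ (w - 1)) x := by
  have hr : w - 1 ≠ -1 := by
    intro h; apply hw; have := congrArg (· + 1) h; simpa using this
  have h := hasDerivAt_ofReal_cpow_const' (ne_of_gt hx) hr
  have h2 := h.const_mul w
  simp only [sub_add_cancel] at h2 h
  have : (fun y : ℝ => w * ((y : ℂ) ^ w / w)) = fun y : ℝ => (y : ℂ) ^ w := by
    funext y; field_simp
  rw [this] at h2
  simpa [mul_comm] using h2

/-- complex MVT bound for the basic term -/
lemma key_bound {s : ℂ} (hs : 0 < s.re) (hs1 : s ≠ 1) {a : ℝ} (ha : 1 ≤ a) :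
    ‖(1 - s) * (a : ℂ) ^ (-s) - ((a : ℝ) + 1 : ℝ) ^ ((1 : ℂ) - s) + (a : ℂ) ^ ((1 : ℂ) - s)‖
      ≤ ‖1 - s‖ * ‖s‖ * a ^ (-s.re - 1) := by
  have ha0 : (0 : ℝ) < a := lt_of_lt_of_le one_pos ha
  set C : ℝ := ‖s‖ * a ^ (-s.re - 1) with hC
  -- inner bound : for t in Icc a (a+1), ‖(t:ℂ)^(-s) - (a:ℂ)^(-s)‖ ≤ C * (t - a)
  have inner : ∀ t ∈ Set.Icc a (a + 1), ‖(t : ℂ) ^ (-s) - (a : ℂ) ^ (-s)‖ ≤ C * (t - a) := by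
    intro t ht
    have := (convex_Icc a (a + 1)).norm_image_sub_le_of_norm_hasDerivWithin_le
      (f := fun τ : ℝ => (τ : ℂ) ^ (-s)) (f' := fun τ : ℝ => (-s) * (τ : ℂ) ^ (-s - 1))
      (C := C) (fun τ hτ => (hasDerivAt_cpow_real (neg_ne_zero.mpr (fun h => by
          simp [h] at hs)) (lt_of_lt_of_le ha0 hτ.1)).hasDerivWithinAt)
      (fun τ hτ => ?_) (Set.left_mem_Icc.mpr (by linarith)) ht
    · calc ‖(t : ℂ) ^ (-s) - (a : ℂ) ^ (-s)‖ ≤ C * ‖t - a‖ := this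
        _ = C * (t - a) := by rw [Real.norm_of_nonneg (by linarith [ht.1])]
    · have hτ0 : (0 : ℝ) < τ := lt_of_lt_of_le ha0 hτ.1
      have hn : ‖(τ:ℂ) ^ (-s - 1)‖ = τ ^ (-s.re - 1) := by
        rw [Complex.norm_cpow_eq_rpow_re_of_pos hτ0]
        norm_num
      rw [norm_mul, norm_neg, hn, hC]
      exact mul_le_mul_of_nonneg_left
        (Real.rpow_le_rpow_of_nonpos ha0 hτ.1 (by linarith)) (norm_nonneg s)
  -- outer MVT
  set g : ℝ → ℂ := fun t => (t : ℂ) ^ ((1 : ℂ) - s) - (1 - s) * (a : ℂ) ^ (-s) * ((t : ℝ) - a)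
  have hg : ∀ t ∈ Set.Icc a (a + 1),
      HasDerivWithinAt g ((1 - s) * ((t : ℂ) ^ (-s) - (a : ℂ) ^ (-s))) (Set.Icc a (a + 1)) t := by
    intro t ht
    have ht0 : (0 : ℝ) < t := lt_of_lt_of_le ha0 ht.1
    have h1 : HasDerivAt (fun τ : ℝ => (τ : ℂ) ^ ((1 : ℂ) - s))
        ((1 - s) * (t : ℂ) ^ (-s)) t := by
      have := hasDerivAt_cpow_real (w := 1 - s) (sub_ne_zero.mpr (Ne.symm hs1)) ht0
      convert this using 2
      ring_nf
    have h2 : HasDerivAt (fun τ : ℝ => (1 - s) * (a : ℂ) ^ (-s) * ((τ : ℝ) - a))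
        ((1 - s) * (a : ℂ) ^ (-s)) t := by
      have hlin : HasDerivAt (fun τ : ℝ => ((τ : ℝ) : ℂ) - (a : ℂ)) 1 t := by
        simpa using (Complex.ofRealCLM.hasDerivAt (x := t)).sub_const (a : ℂ)
      have := hlin.const_mul ((1 - s) * (a : ℂ) ^ (-s))
      simpa using this
    have := h1.sub h2
    have heq : (1 - s) * (t : ℂ) ^ (-s) - (1 - s) * (a : ℂ) ^ (-s)
        = (1 - s) * ((t : ℂ) ^ (-s) - (a : ℂ) ^ (-s)) := by ring
    rw [heq] at this
    exact this.hasDerivWithinAt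
  have hbound : ∀ t ∈ Set.Icc a (a + 1),
      ‖(1 - s) * ((t : ℂ) ^ (-s) - (a : ℂ) ^ (-s))‖ ≤ ‖1 - s‖ * C := by
    intro t ht
    rw [norm_mul]
    gcongr
    calc ‖(t : ℂ) ^ (-s) - (a : ℂ) ^ (-s)‖ ≤ C * (t - a) := inner t ht
      _ ≤ C * 1 := by
          have hC0 : 0 ≤ C := mul_nonneg (norm_nonneg _) (Real.rpow_nonneg ha0.le _)
          have := ht.2
          nlinarith [ht.1]
      _ = C := mul_one C
  have hmvt := (convex_Icc a (a + 1)).norm_image_sub_le_of_norm_hasDerivWithin_le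
    hg hbound (Set.left_mem_Icc.mpr (by linarith))
    (Set.right_mem_Icc.mpr (by linarith))
  have hval : g (a + 1) - g a
      = -((1 - s) * (a : ℂ) ^ (-s) - ((a : ℝ) + 1 : ℝ) ^ ((1 : ℂ) - s) + (a : ℂ) ^ ((1 : ℂ) - s)) := by
    simp only [g]
    push_cast
    ring
  calc ‖(1 - s) * (a : ℂ) ^ (-s) - ((a : ℝ) + 1 : ℝ) ^ ((1 : ℂ) - s) + (a : ℂ) ^ ((1 : ℂ) - s)‖
      = ‖g (a + 1) - g a‖ := by rw [hval, norm_neg]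
    _ ≤ ‖1 - s‖ * C * ‖(a + 1 : ℝ) - a‖ := hmvt
    _ = ‖1 - s‖ * ‖s‖ * a ^ (-s.re - 1) := by
        simp [hC]; ring

lemma slope_bounds {A : ℝ} (hA0 : 0 < A) (hA1 : A < 1) {a : ℝ} (ha : 1 ≤ a) :
    A * (a + 1) ^ (A - 1) ≤ (a + 1) ^ A - a ^ A ∧
      (a + 1) ^ A - a ^ A ≤ A * a ^ (A - 1) := by
  have ha0 : (0 : ℝ) < a := lt_of_lt_of_le one_pos ha
  obtain ⟨c, hc, heq⟩ := exists_hasDerivAt_eq_slope (fun t => t ^ A)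
    (fun t => A * t ^ (A - 1)) (by linarith : a < a + 1)
    (fun t ht => (Real.continuousAt_rpow_const t A
      (Or.inl (by rintro rfl; exact absurd ht.1 (not_le.mpr ha0)))).continuousWithinAt)
    (fun t ht => Real.hasDerivAt_rpow_const
      (Or.inl (by rintro rfl; exact absurd ht.1 (not_lt.mpr ha0.le))))
  have hc0 : (0 : ℝ) < c := lt_of_lt_of_le ha0 hc.1.le
  rw [show a + 1 - a = (1 : ℝ) by ring, div_one] at heq
  constructor
  · rw [← heq]
    exact mul_le_mul_of_nonneg_left
      (Real.rpow_le_rpow_of_nonpos hc0 hc.2.le (by linarith)) hA0.le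
  · rw [← heq]
    exact mul_le_mul_of_nonneg_left
      (Real.rpow_le_rpow_of_nonpos ha0 hc.1.le (by linarith)) hA0.le

/-- the real term sequence -/
noncomputable def tt (A : ℝ) (n : ℕ) : ℝ :=
  A * ((n + 1 : ℕ) : ℝ) ^ (A - 1) - ((n + 2 : ℕ) : ℝ) ^ A + ((n + 1 : ℕ) : ℝ) ^ A

lemma tt_nonneg {A : ℝ} (hA0 : 0 < A) (hA1 : A < 1) (n : ℕ) : 0 ≤ tt A n := by
  have h := (slope_bounds hA0 hA1 (a := ((n + 1 : ℕ) : ℝ))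
    (by exact_mod_cast Nat.one_le_iff_ne_zero.mpr (Nat.succ_ne_zero n))).2
  have hcast : ((n + 2 : ℕ) : ℝ) = ((n + 1 : ℕ) : ℝ) + 1 := by push_cast; ring
  rw [tt, hcast]
  linarith

lemma sum_tt (A : ℝ) (N : ℕ) :
    ∑ k ∈ range N, tt A k
      = A * ∑ j ∈ Ico 1 (N + 1), (j : ℝ) ^ (A - 1) + 1 - ((N + 1 : ℕ) : ℝ) ^ A := by
  induction N with
  | zero => simp
  | succ N ih =>
    rw [Finset.sum_range_succ, ih, Finset.sum_Ico_succ_top (by omega : 1 ≤ N + 1), tt]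
    push_cast
    ring_nf

lemma sum_tt_le {A : ℝ} (hA0 : 0 < A) (hA1 : A < 1) (N : ℕ) :
    ∑ k ∈ range N, tt A k ≤ A := by
  have key : ∀ N : ℕ, 1 ≤ N → ∑ k ∈ range N, tt A k
      ≤ A + ((N : ℕ) : ℝ) ^ A - ((N + 1 : ℕ) : ℝ) ^ A := by
    intro N hN
    induction N with
    | zero => omega
    | succ N ih =>
      rcases Nat.eq_or_lt_of_le hN with h1 | h1
      · have : N = 0 := by omega
        subst this
        rw [Finset.sum_range_one, tt]
        norm_num
        linarith
      · have hN1 : 1 ≤ N := by omega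
        have hNr : (1 : ℝ) ≤ (N : ℝ) := by exact_mod_cast hN1
        have hlow := (slope_bounds hA0 hA1 (a := (N : ℝ)) hNr).1
        rw [Finset.sum_range_succ, tt]
        have hih := ih hN1
        push_cast at hih ⊢
        ring_nf at hih hlow ⊢
        linarith
  rcases Nat.eq_zero_or_pos N with h | h
  · simp [h, hA0.le]
  · have := key N h
    have hle : ((N : ℕ) : ℝ) ^ A ≤ ((N + 1 : ℕ) : ℝ) ^ A := by
      apply Real.rpow_le_rpow (by positivity) (by push_cast; linarith) hA0.le
    linarith

noncomputable def fc (s : ℂ) (n : ℕ) : ℂ :=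
  (1 - s) * ((n + 1 : ℕ) : ℂ) ^ (-s) - ((n + 2 : ℕ) : ℂ) ^ ((1 : ℂ) - s)
    + ((n + 1 : ℕ) : ℂ) ^ ((1 : ℂ) - s)

def UU (δ : ℝ) : Set ℂ := ({s : ℂ | δ < s.re} ∩ {s : ℂ | s.re - 2 * s.im < 1}) ∩ Metric.ball 0 10

lemma one_not_mem_UU (δ : ℝ) : (1 : ℂ) ∉ UU δ := by
  rintro ⟨⟨-, h2⟩, -⟩
  simp [Set.mem_setOf_eq] at h2

lemma UU_open (δ : ℝ) : IsOpen (UU δ) := by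
  refine IsOpen.inter (IsOpen.inter ?_ ?_) Metric.isOpen_ball
  · exact isOpen_lt continuous_const Complex.continuous_re
  · exact isOpen_lt (Complex.continuous_re.sub (continuous_const.mul Complex.continuous_im))
      continuous_const

lemma UU_convex (δ : ℝ) : Convex ℝ (UU δ) := by
  refine Convex.inter (Convex.inter (convex_halfSpace_re_gt δ) ?_) (convex_ball 0 10)
  have hlin : IsLinearMap ℝ (fun s : ℂ => s.re - 2 * s.im) :=
    ⟨fun a b => by simp only [Complex.add_re, Complex.add_im]; ring,
     fun c a => by simp only [Complex.smul_re, Complex.smul_im, smul_eq_mul]; ring⟩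
  exact convex_halfSpace_lt hlin 1

lemma mem_UU_ne_one {δ : ℝ} {s : ℂ} (hs : s ∈ UU δ) : s ≠ 1 := by
  rintro rfl; exact one_not_mem_UU δ hs

lemma fc_bound {δ : ℝ} (hδ : 0 < δ) {s : ℂ} (hs : s ∈ UU δ) (n : ℕ) :
    ‖fc s n‖ ≤ 110 * ((n + 1 : ℕ) : ℝ) ^ (-(1 + δ)) := by
  have hs1 : s ≠ 1 := mem_UU_ne_one hs
  obtain ⟨⟨hre, -⟩, hball⟩ := hs
  simp only [Set.mem_setOf_eq] at hre
  rw [Metric.mem_ball, dist_zero_right] at hball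
  have ha : (1 : ℝ) ≤ ((n + 1 : ℕ) : ℝ) := by exact_mod_cast Nat.one_le_iff_ne_zero.mpr (Nat.succ_ne_zero n)
  have hb := key_bound (s := s) (by linarith) hs1 ha
  have hb1 : ((n + 2 : ℕ) : ℂ) = ((((n + 1 : ℕ) : ℝ) + 1 : ℝ) : ℂ) := by push_cast; ring
  have hb2 : ((n + 1 : ℕ) : ℂ) = (((n + 1 : ℕ) : ℝ) : ℂ) := by push_cast; ring
  have hfc : fc s n = (1 - s) * (((n + 1 : ℕ) : ℝ) : ℂ) ^ (-s)
      - ((((n + 1 : ℕ) : ℝ) + 1 : ℝ) : ℂ) ^ ((1 : ℂ) - s)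
      + (((n + 1 : ℕ) : ℝ) : ℂ) ^ ((1 : ℂ) - s) := by
    rw [fc, hb1, hb2]
  rw [hfc]
  refine hb.trans ?_
  have h1 : ‖1 - s‖ ≤ 11 := by
    calc ‖1 - s‖ ≤ ‖(1 : ℂ)‖ + ‖s‖ := norm_sub_le _ _
      _ ≤ 11 := by rw [norm_one]; linarith
  have h2 : ((n + 1 : ℕ) : ℝ) ^ (-s.re - 1) ≤ ((n + 1 : ℕ) : ℝ) ^ (-(1 + δ)) :=
    Real.rpow_le_rpow_of_exponent_le ha (by linarith)
  calc ‖1 - s‖ * ‖s‖ * ((n + 1 : ℕ) : ℝ) ^ (-s.re - 1)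
      ≤ 11 * 10 * ((n + 1 : ℕ) : ℝ) ^ (-(1 + δ)) := by
        apply mul_le_mul (mul_le_mul h1 hball.le (norm_nonneg _) (by norm_num)) h2
          (Real.rpow_nonneg (by positivity) _) (by norm_num)
    _ = 110 * ((n + 1 : ℕ) : ℝ) ^ (-(1 + δ)) := by norm_num

lemma fc_diff (n : ℕ) : Differentiable ℂ (fun s => fc s n) := by
  have h1 : ((n + 1 : ℕ) : ℂ) ≠ 0 := Nat.cast_ne_zero.mpr (by omega)
  have h2 : ((n + 2 : ℕ) : ℂ) ≠ 0 := Nat.cast_ne_zero.mpr (by omega)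
  intro s
  exact ((((differentiableAt_const (1 : ℂ)).sub differentiableAt_id).mul
      ((differentiableAt_id.neg).const_cpow (Or.inl h1))).sub
      (((differentiableAt_const (1 : ℂ)).sub differentiableAt_id).const_cpow (Or.inl h2))).add
      (((differentiableAt_const (1 : ℂ)).sub differentiableAt_id).const_cpow (Or.inl h1))

lemma u_summable {δ : ℝ} (hδ : 0 < δ) :
    Summable (fun n : ℕ => 110 * ((n + 1 : ℕ) : ℝ) ^ (-(1 + δ))) := by
  have h : Summable (fun n : ℕ => 1 / (n : ℝ) ^ (1 + δ)) :=
    Real.summable_one_div_nat_rpow.mpr (by linarith)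
  have h2 := (summable_nat_add_iff 1).mpr h
  refine (h2.mul_left 110).congr fun n => ?_
  rw [Real.rpow_neg (by positivity), one_div]

lemma summable_fc {δ : ℝ} (hδ : 0 < δ) {s : ℂ} (hs : s ∈ UU δ) : Summable (fc s) :=
  Summable.of_norm_bounded (u_summable hδ) (fun n => fc_bound hδ hs n)

lemma V_diff {δ : ℝ} (hδ : 0 < δ) :
    DifferentiableOn ℂ (fun s => ∑' n, fc s n) (UU δ) :=
  Complex.differentiableOn_tsum_of_summable_norm (u_summable hδ)
    (fun n => (fc_diff n).differentiableOn) (UU_open δ)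
    (fun n s hs => fc_bound hδ hs n)

lemma sum_fc (s : ℂ) (N : ℕ) :
    ∑ k ∈ range N, fc s k
      = (1 - s) * ∑ k ∈ range N, ((k + 1 : ℕ) : ℂ) ^ (-s) + 1 - ((N + 1 : ℕ) : ℂ) ^ ((1 : ℂ) - s) := by
  induction N with
  | zero => simp
  | succ N ih =>
    rw [Finset.sum_range_succ, ih, Finset.sum_range_succ, fc]
    push_cast
    have h22 : ((N : ℂ) + 1 + 1) = ((N : ℂ) + 2) := by ring
    rw [h22]
    ring

lemma V_eq {s : ℂ} (hs : 1 < s.re) (hsum : Summable (fc s)) :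
    ∑' n, fc s n = (1 - s) * riemannZeta s + 1 := by
  have hzsum : Summable (fun n : ℕ => 1 / ((n : ℂ) + 1) ^ s) := by
    have := Complex.summable_one_div_nat_cpow.mpr hs
    exact_mod_cast (summable_nat_add_iff 1).mpr this
  have hz : riemannZeta s = ∑' n : ℕ, 1 / ((n : ℂ) + 1) ^ s :=
    zeta_eq_tsum_one_div_nat_add_one_cpow hs
  have hterm : ∀ k : ℕ, ((k + 1 : ℕ) : ℂ) ^ (-s) = 1 / ((k : ℂ) + 1) ^ s := by
    intro k
    rw [Complex.cpow_neg, one_div]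
    norm_cast
  have T1 : Tendsto (fun N => ∑ k ∈ range N, ((k + 1 : ℕ) : ℂ) ^ (-s)) atTop
      (nhds (riemannZeta s)) := by
    rw [hz]
    have := hzsum.hasSum.tendsto_sum_nat
    refine this.congr fun N => Finset.sum_congr rfl fun k _ => (hterm k).symm
  have T2 : Tendsto (fun N : ℕ => ((N + 1 : ℕ) : ℂ) ^ ((1 : ℂ) - s)) atTop (nhds 0) := by
    rw [tendsto_zero_iff_norm_tendsto_zero]
    have hnorm : ∀ N : ℕ, ‖((N + 1 : ℕ) : ℂ) ^ ((1 : ℂ) - s)‖ = ((N + 1 : ℕ) : ℝ) ^ (1 - s.re) := by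
      intro N
      rw [show ((N + 1 : ℕ) : ℂ) = (((N + 1 : ℕ) : ℝ) : ℂ) by push_cast; ring,
        Complex.norm_cpow_eq_rpow_re_of_pos (by positivity)]
      norm_num
    simp only [hnorm]
    have hbase : Tendsto (fun N : ℕ => ((N + 1 : ℕ) : ℝ)) atTop atTop := by
      refine (tendsto_atTop_add_const_right atTop (1 : ℝ)
        tendsto_natCast_atTop_atTop).congr fun n => by push_cast; ring
    have := (tendsto_rpow_neg_atTop (y := s.re - 1) (by linarith)).comp hbase
    refine this.congr fun N => ?_
    simp [neg_sub]
  have Tmain : Tendsto (fun N => ∑ k ∈ range N, fc s k) atTop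
      (nhds ((1 - s) * riemannZeta s + 1 - 0)) := by
    simp only [sum_fc]
    exact (((T1.const_mul (1 - s)).add_const 1).sub T2)
  rw [sub_zero] at Tmain
  exact tendsto_nhds_unique hsum.hasSum.tendsto_sum_nat Tmain

lemma zeta_key {A : ℝ} (hA0 : 0 < A) (hA1 : A < 1) :
    Summable (tt A) ∧ A * (riemannZeta (1 - (A : ℂ))).re = (∑' n, tt A n) - 1 := by
  set δ : ℝ := (1 - A) / 2 with hδdef
  have hδ : 0 < δ := by simp [hδdef]; linarith
  have hδ2 : δ < 1 - A := by rw [hδdef]; linarith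
  -- the comparison point
  have hz₀ : (2 + Complex.I : ℂ) ∈ UU δ := by
    refine ⟨⟨?_, ?_⟩, ?_⟩
    · simp [Set.mem_setOf_eq, Complex.add_re]
      linarith
    · simp [Set.mem_setOf_eq, Complex.add_re, Complex.add_im]
    · rw [Metric.mem_ball, dist_zero_right]
      calc ‖(2 + Complex.I : ℂ)‖ ≤ ‖(2 : ℂ)‖ + ‖Complex.I‖ := norm_add_le _ _
        _ < 10 := by simp; norm_num
  -- EqOn via identity theorem
  have hF : DifferentiableOn ℂ (fun s => (1 - s) * riemannZeta s + 1) (UU δ) := by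
    intro s hs
    exact ((((differentiableAt_const (1 : ℂ)).sub differentiableAt_id).mul
      (differentiableAt_riemannZeta (mem_UU_ne_one hs))).add
      (differentiableAt_const 1)).differentiableWithinAt
  have hEq : Set.EqOn (fun s => (1 - s) * riemannZeta s + 1) (fun s => ∑' n, fc s n) (UU δ) := by
    refine AnalyticOnNhd.eqOn_of_preconnected_of_eventuallyEq
      (hF.analyticOnNhd (UU_open δ)) ((V_diff hδ).analyticOnNhd (UU_open δ))
      ((UU_convex δ).isPreconnected) hz₀ ?_
    have hW : {s : ℂ | 1 < s.re} ∩ UU δ ∈ nhds (2 + Complex.I : ℂ) := by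
      refine IsOpen.mem_nhds (IsOpen.inter (isOpen_lt continuous_const Complex.continuous_re)
        (UU_open δ)) ⟨?_, hz₀⟩
      simp [Set.mem_setOf_eq, Complex.add_re]
    exact Filter.eventually_of_mem hW fun s hs => (V_eq hs.1 (summable_fc hδ hs.2)).symm
  -- evaluate at 1 - A
  have hs₀ : (1 - (A : ℂ)) ∈ UU δ := by
    refine ⟨⟨?_, ?_⟩, ?_⟩
    · simp [Set.mem_setOf_eq, Complex.sub_re]
      linarith
    · simp [Set.mem_setOf_eq, Complex.sub_re, Complex.sub_im]
      linarith
    · rw [Metric.mem_ball, dist_zero_right, show (1 - (A : ℂ)) = ((1 - A : ℝ) : ℂ) by push_cast; ring,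
        Complex.norm_real, Real.norm_eq_abs, abs_of_pos (by linarith)]
      linarith
  have heval := hEq hs₀
  simp only at heval
  -- rewrite fc at 1 - A as real terms
  have hfc_real : ∀ n : ℕ, fc (1 - (A : ℂ)) n = ((tt A n : ℝ) : ℂ) := by
    intro n
    have hx1 : (1 : ℝ) ≤ ((n + 1 : ℕ) : ℝ) := by
      exact_mod_cast Nat.one_le_iff_ne_zero.mpr (Nat.succ_ne_zero n)
    have he1 : -(1 - (A : ℂ)) = ((A - 1 : ℝ) : ℂ) := by push_cast; ring
    have he2 : (1 : ℂ) - (1 - (A : ℂ)) = ((A : ℝ) : ℂ) := by push_cast; ring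
    have hc1 : ((n + 1 : ℕ) : ℂ) = (((n + 1 : ℕ) : ℝ) : ℂ) := by push_cast; ring
    have hc2 : ((n + 2 : ℕ) : ℂ) = (((n + 2 : ℕ) : ℝ) : ℂ) := by push_cast; ring
    rw [fc, he1, he2, hc1, hc2,
      ← Complex.ofReal_cpow (by linarith) (A - 1),
      ← Complex.ofReal_cpow (by positivity) A,
      ← Complex.ofReal_cpow (by linarith) A, tt]
    push_cast
    ring
  have hsumtt : Summable (tt A) := by
    have := summable_fc hδ hs₀
    rw [show fc (1 - (A : ℂ)) = (fun n => ((tt A n : ℝ) : ℂ)) from funext hfc_real] at this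
    exact Complex.summable_ofReal.mp this
  have hV : ∑' n, fc (1 - (A : ℂ)) n = (((∑' n, tt A n) : ℝ) : ℂ) := by
    rw [show fc (1 - (A : ℂ)) = (fun n => ((tt A n : ℝ) : ℂ)) from funext hfc_real]
    exact (Complex.ofReal_tsum _).symm
  rw [hV] at heval
  -- extract real part
  have hmul : (1 - (1 - (A : ℂ))) = ((A : ℝ) : ℂ) := by push_cast; ring
  rw [hmul] at heval
  refine ⟨hsumtt, ?_⟩
  have := congrArg Complex.re heval
  rw [Complex.add_re, Complex.re_ofReal_mul, Complex.one_re, Complex.ofReal_re] at this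
  linarith

end Stmt7Aux

open Stmt7Aux in
/-- discrete Gronwall–Bellman lemma, case `0 < A < 1`,
with the constant expressed through the Riemann zeta function at `1 - A`. -/
theorem stmt7
    (A B : ℝ) (hA0 : 0 < A) (hA1 : A < 1) (hB : 0 ≤ B)
    (e : ℕ → ℝ)
    (hpos : ∀ n : ℕ, 1 ≤ n → 0 < e n)
    (hrec : ∀ n : ℕ, 2 ≤ n →
      e n ≤ (1 / (n : ℝ)) * (A * ∑ i ∈ Finset.Ico 1 n, e i + B)) :
    ∀ n : ℕ, 1 ≤ n →
      e n ≤ (max (e 1) B / (-(A * (riemannZeta (1 - (A : ℂ))).re))) / (n : ℝ) ^ (1 - A) := by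
  obtain ⟨hsum, hkey⟩ := zeta_key hA0 hA1
  set T : ℝ := ∑' n, tt A n with hTdef
  have hT0 : 0 ≤ T := tsum_nonneg (fun n => tt_nonneg hA0 hA1 n)
  have hTA : T ≤ A := le_of_tendsto hsum.hasSum.tendsto_sum_nat
    (Filter.Eventually.of_forall (fun N => sum_tt_le hA0 hA1 N))
  set D : ℝ := 1 - T with hDdef
  have hD0 : 0 < D := by rw [hDdef]; linarith
  have hD1 : D ≤ 1 := by rw [hDdef]; linarith
  have hmax0 : 0 ≤ max (e 1) B := le_trans hB (le_max_right _ _)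
  set M : ℝ := max (e 1) B / D with hMdef
  have hM0 : 0 ≤ M := div_nonneg hmax0 hD0.le
  have hMD : M * D = max (e 1) B := by rw [hMdef]; field_simp
  have he1M : e 1 ≤ M := by
    have h1 : e 1 ≤ max (e 1) B := le_max_left _ _
    have h2 : max (e 1) B ≤ M := by
      rw [hMdef, le_div_iff₀ hD0]
      nlinarith
    linarith
  -- the key summation bound
  have hkeysum : ∀ n : ℕ, 1 ≤ n →
      A * ∑ j ∈ Ico 1 n, (j : ℝ) ^ (A - 1) ≤ (n : ℝ) ^ A - 1 + T := by
    intro n hn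
    have hpart : ∑ k ∈ range (n - 1), tt A k ≤ T :=
      hsum.sum_le_tsum _ (fun i _ => tt_nonneg hA0 hA1 i)
    have hid := sum_tt A (n - 1)
    rw [show (n - 1) + 1 = n from by omega] at hid
    rw [hid] at hpart
    linarith
  -- main induction
  have main : ∀ n : ℕ, 1 ≤ n → e n ≤ M * (n : ℝ) ^ (A - 1) := by
    intro n
    induction n using Nat.strong_induction_on with
    | _ n ih =>
      intro hn
      rcases eq_or_lt_of_le hn with h1 | h2
      · rw [← h1]
        norm_num
        exact he1M
      · have hn2 : 2 ≤ n := h2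
        have hnr : (0 : ℝ) < (n : ℝ) := by positivity
        have hsum_le : ∑ i ∈ Ico 1 n, e i ≤ M * ∑ j ∈ Ico 1 n, (j : ℝ) ^ (A - 1) := by
          rw [Finset.mul_sum]
          refine Finset.sum_le_sum fun i hi => ?_
          rw [Finset.mem_Ico] at hi
          exact ih i hi.2 hi.1
        have hpow_nonneg : (0 : ℝ) ≤ ∑ j ∈ Ico 1 n, (j : ℝ) ^ (A - 1) :=
          Finset.sum_nonneg fun j _ => Real.rpow_nonneg (by positivity) _
        have hchain : e n ≤ (1 / (n : ℝ)) * (M * ((n : ℝ) ^ A - 1 + T) + M * (1 - T)) := by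
          refine (hrec n hn2).trans ?_
          apply mul_le_mul_of_nonneg_left _ (by positivity)
          have hstep1 : A * ∑ i ∈ Ico 1 n, e i ≤ A * (M * ∑ j ∈ Ico 1 n, (j : ℝ) ^ (A - 1)) :=
            mul_le_mul_of_nonneg_left hsum_le hA0.le
          have hstep2 : A * (M * ∑ j ∈ Ico 1 n, (j : ℝ) ^ (A - 1))
              ≤ M * ((n : ℝ) ^ A - 1 + T) := by
            rw [show A * (M * ∑ j ∈ Ico 1 n, (j : ℝ) ^ (A - 1))
                = M * (A * ∑ j ∈ Ico 1 n, (j : ℝ) ^ (A - 1)) from by ring]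
            exact mul_le_mul_of_nonneg_left (hkeysum n hn) hM0
          have hstep3 : B ≤ M * (1 - T) := by
            rw [← hDdef, hMD]; exact le_max_right _ _
          linarith
        refine hchain.trans ?_
        have hfinal : (1 / (n : ℝ)) * (M * ((n : ℝ) ^ A - 1 + T) + M * (1 - T))
            = M * ((n : ℝ) ^ A / (n : ℝ)) := by ring
        rw [hfinal]
        have hrpow : (n : ℝ) ^ A / (n : ℝ) = (n : ℝ) ^ (A - 1) := by
          rw [Real.rpow_sub hnr, Real.rpow_one]
        rw [hrpow]
  intro n hn
  have h := main n hn
  have hne : -(A * (riemannZeta (1 - (A : ℂ))).re) = D := by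
    rw [hkey, hDdef]; ring
  rw [hne, ← hMdef]
  have hnr : (0 : ℝ) < (n : ℝ) := by
    have : 1 ≤ n := hn; positivity
  rw [div_eq_mul_inv, ← Real.rpow_neg hnr.le, show -(1 - A) = A - 1 from by ring]
  exact h
end

section
/- Let m > 0, X > 0 and define y : [0,X] → ℝ by y(x) = e^{x/(m+1)} · (1 − e^{−(m/(m+1))·x})^{1/m}. Then y satisfies y(x)^{m+1} = ∫_0^x e^{x−t} y(t) dt for every x ∈ [0,X]. -/
open Real Set intervalIntegral

/-- the explicit function solves the Volterra equation with
convolution kernel `K(x,t) = exp (x - t)` on `[0,X]`. -/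
theorem stmt11
    (m X : ℝ) (hm : 0 < m) (hX : 0 < X)
    (y : ℝ → ℝ)
    (hy : ∀ x : ℝ, y x =
      Real.exp (x / (m + 1)) * (1 - Real.exp (-(m / (m + 1)) * x)) ^ (1 / m)) :
    ∀ x ∈ Set.Icc (0 : ℝ) X,
      y x ^ (m + 1) = ∫ t in (0 : ℝ)..x, Real.exp (x - t) * y t := by
  intro x hx
  obtain ⟨hx0, hxX⟩ := hx
  have hm1 : (0:ℝ) < m + 1 := by linarith
  set c : ℝ := m / (m + 1) with hc
  have hcpos : 0 < c := div_pos hm hm1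
  set p : ℝ := (m + 1) / m with hp
  have hp1 : (1:ℝ) ≤ p := by
    rw [hp, le_div_iff₀ hm]; linarith
  have hpc : p * c = 1 := by
    rw [hp, hc]; field_simp
  have hpm : p - 1 = 1 / m := by
    rw [hp]; field_simp; ring
  -- derivative of F t = (1 - exp (-c*t))^p
  have key : ∀ t : ℝ, HasDerivAt (fun s => (1 - Real.exp (-c * s)) ^ p)
      (Real.exp (-c * t) * (1 - Real.exp (-c * t)) ^ (1/m)) t := by
    intro t
    have h0 : HasDerivAt (fun s : ℝ => -c * s) (-c) t := by
      simpa using (hasDerivAt_id t).const_mul (-c)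
    have h1 : HasDerivAt (fun s : ℝ => 1 - Real.exp (-c * s))
        (c * Real.exp (-c * t)) t := by
      have := ((Real.hasDerivAt_exp (-c * t)).comp t h0).const_sub 1
      exact this.congr_deriv (by ring)
    have h2 := (Real.hasDerivAt_rpow_const (p := p)
      (x := 1 - Real.exp (-c * t)) (Or.inr hp1)).comp t h1
    refine h2.congr_deriv (Eq.symm ?_)
    rw [hpm]
    linear_combination (-(Real.exp (-c*t) * (1 - Real.exp (-c*t)) ^ (1/m))) * hpc
  have hcont : Continuous (fun t : ℝ =>
      Real.exp (-c * t) * (1 - Real.exp (-c * t)) ^ (1/m)) := by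
    apply Continuous.mul
    · exact Real.continuous_exp.comp (continuous_const.mul continuous_id)
    · apply Continuous.rpow_const
      · exact continuous_const.sub
          (Real.continuous_exp.comp (continuous_const.mul continuous_id))
      · intro t; right; positivity
  have hint : (∫ t in (0:ℝ)..x,
      Real.exp (-c * t) * (1 - Real.exp (-c * t)) ^ (1/m))
      = (1 - Real.exp (-c * x)) ^ p := by
    rw [intervalIntegral.integral_eq_sub_of_hasDerivAt
      (fun t _ => key t) (hcont.intervalIntegrable 0 x)]
    simp only [mul_zero, Real.exp_zero, sub_self]
    rw [Real.zero_rpow (by positivity : p ≠ 0), sub_zero]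
  have hu : 0 ≤ 1 - Real.exp (-c * x) := by
    have : Real.exp (-c * x) ≤ 1 := by
      rw [Real.exp_le_one_iff]; nlinarith
    linarith
  -- rewrite integrand
  have heq : ∀ t : ℝ, Real.exp (x - t) * y t =
      Real.exp x * (Real.exp (-c * t) * (1 - Real.exp (-c * t)) ^ (1/m)) := by
    intro t
    rw [hy t, ← mul_assoc, ← mul_assoc, ← Real.exp_add, ← Real.exp_add]
    congr 2
    rw [hc]; field_simp; ring
  calc y x ^ (m + 1)
      = Real.exp x * (1 - Real.exp (-c * x)) ^ p := by
        rw [hy x,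
          Real.mul_rpow (Real.exp_pos _).le (Real.rpow_nonneg hu _),
          ← Real.exp_mul, ← Real.rpow_mul hu]
        congr 1
        · rw [div_mul_cancel₀]; exact hm1.ne'
        · rw [hp]; field_simp
    _ = ∫ t in (0:ℝ)..x, Real.exp (x - t) * y t := by
        rw [← hint, ← intervalIntegral.integral_const_mul]
        exact (intervalIntegral.integral_congr (fun t _ => (heq t))).symm
end

section
/- Let m > 0, C > 0, X > 0, let K : [0,X]×[0,X] → ℝ be continuous and positive with sup_{0 ≤ t ≤ x} |K(x,t) − C| → 0 as x → 0⁺, and let y : [0,X] → ℝ be continuous, positive on (0,X], and satisfy y(x)^{m+1} = ∫_0^x K(x,t) y(t) dt on [0,X]. Define y_1(h) := (∫_0^h K(h,t) dt)^{1/m} for h ∈ (0,X]. Then y_1(h) − y(h) ∼ (1 − (m/(m+1))^{1/m}) · (C·h)^{1/m} as h → 0⁺; that is, lim_{h→0⁺} (y_1(h) − y(h)) / (C·h)^{1/m} = 1 − (m/(m+1))^{1/m}. -/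
open Real Set Filter intervalIntegral
open Topology

/-- asymptotics of the starting error of the explicit scheme
when the kernel tends to the constant `C` near the origin, uniformly in `t ≤ x`. -/
theorem stmt13
    (m C X : ℝ) (hm : 0 < m) (hC : 0 < C) (hX : 0 < X)
    (K : ℝ → ℝ → ℝ)
    (hKcont : ContinuousOn (fun p : ℝ × ℝ => K p.1 p.2) (Set.Icc 0 X ×ˢ Set.Icc 0 X))
    (hKpos : ∀ x ∈ Set.Icc (0 : ℝ) X, ∀ t ∈ Set.Icc (0 : ℝ) X, 0 < K x t)
    (hKasymp : ∀ ε > (0 : ℝ), ∃ δ > (0 : ℝ), ∀ x : ℝ, 0 < x → x < δ → x ≤ X →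
      ∀ t : ℝ, 0 ≤ t → t ≤ x → |K x t - C| < ε)
    (y : ℝ → ℝ)
    (hycont : ContinuousOn y (Set.Icc 0 X))
    (hypos : ∀ x ∈ Set.Ioc (0 : ℝ) X, 0 < y x)
    (hsol : ∀ x ∈ Set.Icc (0 : ℝ) X, y x ^ (m + 1) = ∫ t in (0 : ℝ)..x, K x t * y t) :
    Filter.Tendsto
      (fun h : ℝ => ((∫ t in (0 : ℝ)..h, K h t) ^ (1 / m) - y h) / (C * h) ^ (1 / m))
      (nhdsWithin 0 (Set.Ioi 0))
      (nhds (1 - (m / (m + 1)) ^ (1 / m))) := by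
  have hm1 : (0:ℝ) < m + 1 := by linarith
  set p : ℝ := m / (m + 1) with hp_def
  have hp : 0 < p := div_pos hm hm1
  set F : ℝ → ℝ := fun h => ∫ t in (0:ℝ)..h, y t with hF_def
  -- y is nonnegative on [0, X]
  have hy0 : 0 ≤ y 0 := by
    have h1 : Tendsto y (𝓝[Ioc 0 X] 0) (𝓝 (y 0)) := by
      have := (hycont 0 ⟨le_refl 0, hX.le⟩).tendsto
      exact this.mono_left (nhdsWithin_mono 0 Ioc_subset_Icc_self)
    have h2 : 𝓝[Ioc 0 X] 0 = 𝓝[>] (0:ℝ) := nhdsWithin_Ioc_eq_nhdsGT hX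
    rw [h2] at h1
    refine ge_of_tendsto h1 ?_
    have hmem : Ioc (0:ℝ) X ∈ 𝓝[>] (0:ℝ) := h2 ▸ self_mem_nhdsWithin
    filter_upwards [hmem] with x hx
    exact (hypos x hx).le
  have hynn : ∀ t ∈ Icc (0:ℝ) X, 0 ≤ y t := by
    intro t ht
    rcases eq_or_lt_of_le ht.1 with h | h
    · rw [← h]; exact hy0
    · exact (hypos t ⟨h, ht.2⟩).le
  -- integrability of y
  have hyIntX : ∀ h ∈ Icc (0:ℝ) X, IntervalIntegrable y MeasureTheory.volume 0 h := by
    intro h hh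
    apply ContinuousOn.intervalIntegrable
    rw [uIcc_of_le hh.1]
    exact hycont.mono (Icc_subset_Icc le_rfl hh.2)
  -- F facts
  have hF0 : F 0 = 0 := intervalIntegral.integral_same
  have hFpos : ∀ h ∈ Ioc (0:ℝ) X, 0 < F h := by
    intro h hh
    refine intervalIntegral_pos_of_pos_on (hyIntX h ⟨hh.1.le, hh.2⟩) ?_ hh.1
    intro t ht
    exact hypos t ⟨ht.1, ht.2.le.trans hh.2⟩
  have hFnn : ∀ h ∈ Icc (0:ℝ) X, 0 ≤ F h := by
    intro h hh
    apply intervalIntegral.integral_nonneg hh.1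
    intro t ht
    exact hynn t ⟨ht.1, ht.2.trans hh.2⟩
  have hFcont : ContinuousOn F (Icc 0 X) := by
    have : MeasureTheory.IntegrableOn y (uIcc 0 X) MeasureTheory.volume := by
      rw [uIcc_of_le hX.le]
      exact hycont.integrableOn_Icc
    have h2 := intervalIntegral.continuousOn_primitive_interval this
    rw [uIcc_of_le hX.le] at h2
    exact h2
  -- continuity of K slices
  have hKslice : ∀ h ∈ Icc (0:ℝ) X, ContinuousOn (fun t => K h t) (Icc 0 h) := by
    intro h hh
    have : ContinuousOn (fun t : ℝ => ((h, t) : ℝ × ℝ)) (Icc 0 h) :=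
      (continuous_const.prodMk continuous_id).continuousOn
    refine hKcont.comp this ?_
    intro t ht
    exact ⟨hh, ht.1, ht.2.trans hh.2⟩
  have hKyInt : ∀ h ∈ Icc (0:ℝ) X,
      IntervalIntegrable (fun t => K h t * y t) MeasureTheory.volume 0 h := by
    intro h hh
    apply ContinuousOn.intervalIntegrable
    rw [uIcc_of_le hh.1]
    exact (hKslice h hh).mul (hycont.mono (Icc_subset_Icc le_rfl hh.2))
  have hKInt : ∀ h ∈ Icc (0:ℝ) X,
      IntervalIntegrable (fun t => K h t) MeasureTheory.volume 0 h := by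
    intro h hh
    apply ContinuousOn.intervalIntegrable
    rw [uIcc_of_le hh.1]
    exact hKslice h hh
  -- integral bounds from the uniform kernel asymptotics
  have bounds : ∀ ε > (0:ℝ), ∃ δ, 0 < δ ∧ δ ≤ X ∧ ∀ h, 0 < h → h < δ →
      ((C - ε) * h ≤ (∫ t in (0:ℝ)..h, K h t) ∧ (∫ t in (0:ℝ)..h, K h t) ≤ (C + ε) * h)
      ∧ ((C - ε) * F h ≤ (∫ t in (0:ℝ)..h, K h t * y t)
          ∧ (∫ t in (0:ℝ)..h, K h t * y t) ≤ (C + ε) * F h) := by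
    intro ε hε
    obtain ⟨δ, hδ, hK⟩ := hKasymp ε hε
    refine ⟨min δ X, lt_min hδ hX, min_le_right _ _, ?_⟩
    intro h h0 hhδ
    have hhX : h ≤ X := le_of_lt (lt_of_lt_of_le hhδ (min_le_right _ _))
    have hhδ' : h < δ := lt_of_lt_of_le hhδ (min_le_left _ _)
    have hIcc : h ∈ Icc (0:ℝ) X := ⟨h0.le, hhX⟩
    have hKb : ∀ t ∈ Icc (0:ℝ) h, C - ε ≤ K h t ∧ K h t ≤ C + ε := by
      intro t ht
      have habs := abs_lt.1 (hK h h0 hhδ' hhX t ht.1 ht.2)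
      constructor <;> linarith [habs.1, habs.2]
    refine ⟨⟨?_, ?_⟩, ?_, ?_⟩
    · have := intervalIntegral.integral_mono_on h0.le intervalIntegrable_const
        (hKInt h hIcc) (fun t ht => (hKb t ht).1)
      rw [intervalIntegral.integral_const, sub_zero, smul_eq_mul] at this
      linarith
    · have := intervalIntegral.integral_mono_on h0.le (hKInt h hIcc)
        intervalIntegrable_const (fun t ht => (hKb t ht).2)
      rw [intervalIntegral.integral_const, sub_zero, smul_eq_mul] at this
      linarith
    · have := intervalIntegral.integral_mono_on h0.le ((hyIntX h hIcc).const_mul (C - ε))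
        (hKyInt h hIcc) (fun t ht =>
          mul_le_mul_of_nonneg_right (hKb t ht).1 (hynn t ⟨ht.1, ht.2.trans hhX⟩))
      simpa [intervalIntegral.integral_const_mul] using this
    · have := intervalIntegral.integral_mono_on h0.le (hKyInt h hIcc)
        ((hyIntX h hIcc).const_mul (C + ε)) (fun t ht =>
          mul_le_mul_of_nonneg_right (hKb t ht).2 (hynn t ⟨ht.1, ht.2.trans hhX⟩))
      simpa [intervalIntegral.integral_const_mul] using this
  -- Gronwall-type squeeze for the primitive F
  have key : ∀ ε, 0 < ε → ε < C → ∃ δ, 0 < δ ∧ δ ≤ X ∧ ∀ h, 0 < h → h < δ →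
      p * (C - ε) ^ (1/(m+1)) * h ≤ (F h) ^ p ∧ (F h) ^ p ≤ p * (C + ε) ^ (1/(m+1)) * h := by
    intro ε hε hεC
    obtain ⟨δ, hδ0, hδX, hB⟩ := bounds ε hε
    refine ⟨δ, hδ0, hδX, ?_⟩
    intro h h0 hhδ
    have hhX : h < X := lt_of_lt_of_le hhδ hδX
    set G : ℝ → ℝ := fun u => F u ^ p with hG_def
    have hGcont : ContinuousOn G (Icc 0 h) := by
      have hrc : Continuous fun t : ℝ => t ^ p :=
        continuous_iff_continuousAt.2 fun x => Real.continuousAt_rpow_const x p (Or.inr hp.le)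
      exact hrc.comp_continuousOn (hFcont.mono (Icc_subset_Icc le_rfl hhX.le))
    have hderiv : ∀ x ∈ Ioo (0:ℝ) h, HasDerivAt G (y x * p * F x ^ (p - 1)) x := by
      intro x hx
      have hxX : x ∈ Ioo (0:ℝ) X := ⟨hx.1, hx.2.trans hhX⟩
      have hmemIcc : Icc (0:ℝ) X ∈ 𝓝 x := Icc_mem_nhds hxX.1 hxX.2
      have hyCA : ContinuousAt y x := hycont.continuousAt hmemIcc
      have hsm : StronglyMeasurableAtFilter y (𝓝 x) :=
        ⟨Icc 0 X, hmemIcc, hycont.aestronglyMeasurable measurableSet_Icc⟩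
      have hFd : HasDerivAt F (y x) x :=
        intervalIntegral.integral_hasDerivAt_right (hyIntX x ⟨hxX.1.le, hxX.2.le⟩) hsm hyCA
      have hFx : F x ≠ 0 := (hFpos x ⟨hx.1, hxX.2.le⟩).ne'
      exact hFd.rpow_const (Or.inl hFx)
    have hdiff : DifferentiableOn ℝ G (interior (Icc (0:ℝ) h)) := by
      rw [interior_Icc]
      exact fun x hx => ((hderiv x hx).differentiableAt).differentiableWithinAt
    have hdbound : ∀ x ∈ Ioo (0:ℝ) h,
        p * (C - ε) ^ (1/(m+1)) ≤ deriv G x ∧ deriv G x ≤ p * (C + ε) ^ (1/(m+1)) := by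
      intro x hx
      rw [(hderiv x hx).deriv]
      have hxIcc : x ∈ Icc (0:ℝ) X := ⟨hx.1.le, (hx.2.trans hhX).le⟩
      have hFx : 0 < F x := hFpos x ⟨hx.1, hxIcc.2⟩
      have hyx : 0 < y x := hypos x ⟨hx.1, hxIcc.2⟩
      have hBx := (hB x hx.1 (hx.2.trans hhδ)).2
      have hsolx := hsol x hxIcc
      have hyval : (y x ^ (m+1)) ^ (1/(m+1)) = y x := by
        rw [← Real.rpow_mul hyx.le, mul_one_div_cancel (ne_of_gt hm1), Real.rpow_one]
      have hylow : ((C - ε) * F x) ^ (1/(m+1)) ≤ y x := by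
        rw [← hyval]
        apply Real.rpow_le_rpow (mul_nonneg (by linarith) hFx.le) ?_ (by positivity)
        rw [hsolx]; exact hBx.1
      have hyup : y x ≤ ((C + ε) * F x) ^ (1/(m+1)) := by
        rw [← hyval]
        apply Real.rpow_le_rpow (by positivity) ?_ (by positivity)
        rw [hsolx]; exact hBx.2
      have hsplit : ∀ c : ℝ, 0 ≤ c →
          (c * F x) ^ (1/(m+1)) * p * F x ^ (p - 1) = p * c ^ (1/(m+1)) := by
        intro c hc
        have hexp : F x ^ (1/(m+1)) * F x ^ (p - 1) = 1 := by
          rw [← Real.rpow_add hFx]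
          have hz : 1/(m+1) + (p - 1) = 0 := by
            rw [hp_def]; field_simp; ring
          rw [hz, Real.rpow_zero]
        calc (c * F x) ^ (1/(m+1)) * p * F x ^ (p - 1)
            = c ^ (1/(m+1)) * F x ^ (1/(m+1)) * p * F x ^ (p - 1) := by
              rw [Real.mul_rpow hc hFx.le]
          _ = p * c ^ (1/(m+1)) * (F x ^ (1/(m+1)) * F x ^ (p - 1)) := by ring
          _ = p * c ^ (1/(m+1)) := by rw [hexp, mul_one]
      have hFpow : 0 ≤ F x ^ (p - 1) := Real.rpow_nonneg hFx.le _
      constructor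
      · rw [← hsplit (C - ε) (by linarith)]
        exact mul_le_mul_of_nonneg_right
          (mul_le_mul_of_nonneg_right hylow hp.le) hFpow
      · rw [← hsplit (C + ε) (by positivity)]
        exact mul_le_mul_of_nonneg_right
          (mul_le_mul_of_nonneg_right hyup hp.le) hFpow
    have hconv : Convex ℝ (Icc (0:ℝ) h) := convex_Icc _ _
    have h0mem : (0:ℝ) ∈ Icc (0:ℝ) h := ⟨le_rfl, h0.le⟩
    have hhmem : h ∈ Icc (0:ℝ) h := ⟨h0.le, le_rfl⟩
    have hG0 : G 0 = 0 := by
      simp only [hG_def, hF0]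
      exact Real.zero_rpow (ne_of_gt hp)
    constructor
    · have hlo := hconv.mul_sub_le_image_sub_of_le_deriv hGcont hdiff
        (fun x hx => by rw [interior_Icc] at hx; exact (hdbound x hx).1)
        0 h0mem h hhmem h0.le
      rw [hG0, sub_zero, sub_zero] at hlo
      exact hlo
    · have hup := hconv.image_sub_le_mul_sub_of_deriv_le hGcont hdiff
        (fun x hx => by rw [interior_Icc] at hx; exact (hdbound x hx).2)
        0 h0mem h hhmem h0.le
      rw [hG0, sub_zero, sub_zero] at hup
      exact hup
  -- limit of F h ^ p / h
  have hcont_lo : Tendsto (fun e : ℝ => p * (C - e) ^ (1/(m+1))) (𝓝 0)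
      (𝓝 (p * C ^ (1/(m+1)))) := by
    have h1 : ContinuousAt (fun e : ℝ => p * (C - e) ^ (1/(m+1))) 0 := by
      refine continuousAt_const.mul ?_
      have h2 : ContinuousAt (fun t : ℝ => t ^ (1/(m+1))) (C - 0) :=
        Real.continuousAt_rpow_const _ _ (Or.inl (by simpa using hC.ne'))
      exact h2.comp (continuousAt_const.sub continuousAt_id)
    simpa using h1.tendsto
  have hcont_hi : Tendsto (fun e : ℝ => p * (C + e) ^ (1/(m+1))) (𝓝 0)
      (𝓝 (p * C ^ (1/(m+1)))) := by
    have h1 : ContinuousAt (fun e : ℝ => p * (C + e) ^ (1/(m+1))) 0 := by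
      refine continuousAt_const.mul ?_
      have h2 : ContinuousAt (fun t : ℝ => t ^ (1/(m+1))) (C + 0) :=
        Real.continuousAt_rpow_const _ _ (Or.inl (by simpa using hC.ne'))
      exact h2.comp (continuousAt_const.add continuousAt_id)
    simpa using h1.tendsto
  have T_w : Tendsto (fun h => F h ^ p / h) (𝓝[>] (0:ℝ)) (𝓝 (p * C ^ (1/(m+1)))) := by
    rw [tendsto_order]
    constructor
    · intro l hl
      have hev : ∀ᶠ e in 𝓝 (0:ℝ), l < p * (C - e) ^ (1/(m+1)) :=
        hcont_lo.eventually_const_lt hl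
      have hev2 : ∀ᶠ e in 𝓝 (0:ℝ), e < C := eventually_lt_nhds hC
      have hev3 : ∀ᶠ e in 𝓝[>] (0:ℝ), (l < p * (C - e) ^ (1/(m+1)) ∧ e < C) ∧ e ∈ Ioi (0:ℝ) :=
        ((hev.and hev2).filter_mono nhdsWithin_le_nhds).and eventually_mem_nhdsWithin
      obtain ⟨ε, ⟨hεl, hεC⟩, hε0⟩ := hev3.exists
      obtain ⟨δ, hδ0, hδX, hkey⟩ := key ε hε0 hεC
      filter_upwards [Ioo_mem_nhdsGT_of_mem (Set.left_mem_Ico.2 hδ0)] with h hh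
      have h1 := (hkey h hh.1 hh.2).1
      have h2 : p * (C - ε) ^ (1/(m+1)) ≤ F h ^ p / h := (le_div_iff₀ hh.1).2 h1
      linarith
    · intro u hu
      have hev : ∀ᶠ e in 𝓝 (0:ℝ), p * (C + e) ^ (1/(m+1)) < u :=
        hcont_hi.eventually_lt_const hu
      have hev2 : ∀ᶠ e in 𝓝 (0:ℝ), e < C := eventually_lt_nhds hC
      have hev3 : ∀ᶠ e in 𝓝[>] (0:ℝ), (p * (C + e) ^ (1/(m+1)) < u ∧ e < C) ∧ e ∈ Ioi (0:ℝ) :=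
        ((hev.and hev2).filter_mono nhdsWithin_le_nhds).and eventually_mem_nhdsWithin
      obtain ⟨ε, ⟨hεu, hεC⟩, hε0⟩ := hev3.exists
      obtain ⟨δ, hδ0, hδX, hkey⟩ := key ε hε0 hεC
      filter_upwards [Ioo_mem_nhdsGT_of_mem (Set.left_mem_Ico.2 hδ0)] with h hh
      have h1 := (hkey h hh.1 hh.2).2
      have h2 : F h ^ p / h ≤ p * (C + ε) ^ (1/(m+1)) := (div_le_iff₀ hh.1).2 h1
      linarith
  -- limit of F h / h ^ ((m+1)/m)
  have T_F : Tendsto (fun h => F h / h ^ ((m+1)/m)) (𝓝[>] (0:ℝ))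
      (𝓝 (p ^ ((m+1)/m) * C ^ (1/m))) := by
    have base := T_w.rpow_const (p := (m+1)/m) (Or.inr (by positivity))
    have hlim : (p * C ^ (1/(m+1))) ^ ((m+1)/m) = p ^ ((m+1)/m) * C ^ (1/m) := by
      rw [Real.mul_rpow hp.le (Real.rpow_nonneg hC.le _), ← Real.rpow_mul hC.le]
      have hexp : (1/(m+1)) * ((m+1)/m) = 1/m := by field_simp
      rw [hexp]
    rw [hlim] at base
    refine Tendsto.congr' ?_ base
    filter_upwards [Ioo_mem_nhdsGT_of_mem (Set.left_mem_Ico.2 hX)] with h hh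
    have hFn : 0 ≤ F h := hFnn h ⟨hh.1.le, hh.2.le⟩
    rw [Real.div_rpow (Real.rpow_nonneg hFn _) hh.1.le, ← Real.rpow_mul hFn]
    have hone : p * ((m+1)/m) = 1 := by rw [hp_def]; field_simp
    rw [hone, Real.rpow_one]
  -- limit of the ratio (∫ K y) / F
  have T_q : Tendsto (fun h => (∫ t in (0:ℝ)..h, K h t * y t) / F h) (𝓝[>] (0:ℝ)) (𝓝 C) := by
    rw [tendsto_order]
    constructor
    · intro l hl
      obtain ⟨δ, hδ0, hδX, hB⟩ := bounds ((C - l)/2) (by linarith)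
      filter_upwards [Ioo_mem_nhdsGT_of_mem (Set.left_mem_Ico.2 hδ0)] with h hh
      have hF := hFpos h ⟨hh.1, hh.2.le.trans hδX⟩
      have h1 := (hB h hh.1 hh.2).2.1
      rw [lt_div_iff₀ hF]
      nlinarith
    · intro u hu
      obtain ⟨δ, hδ0, hδX, hB⟩ := bounds ((u - C)/2) (by linarith)
      filter_upwards [Ioo_mem_nhdsGT_of_mem (Set.left_mem_Ico.2 hδ0)] with h hh
      have hF := hFpos h ⟨hh.1, hh.2.le.trans hδX⟩
      have h1 := (hB h hh.1 hh.2).2.2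
      rw [div_lt_iff₀ hF]
      nlinarith
  -- limit of y h / (C h)^(1/m)
  have hCq : C * C ^ (1/m) = C ^ ((m+1)/m) := by
    have h1 : (m+1)/m = 1 + 1/m := by field_simp
    rw [h1, Real.rpow_add hC, Real.rpow_one]
  have hCqpos : 0 < C ^ ((m+1)/m) := Real.rpow_pos_of_pos hC _
  have T_u : Tendsto (fun h => y h ^ (m+1) / (C * h) ^ ((m+1)/m)) (𝓝[>] (0:ℝ))
      (𝓝 (p ^ ((m+1)/m))) := by
    have hmul := (T_q.mul T_F).mul_const (C ^ ((m+1)/m))⁻¹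
    have hval : C * (p ^ ((m+1)/m) * C ^ (1/m)) * (C ^ ((m+1)/m))⁻¹ = p ^ ((m+1)/m) := by
      have : C * (p ^ ((m+1)/m) * C ^ (1/m)) = p ^ ((m+1)/m) * (C * C ^ (1/m)) := by ring
      rw [this, hCq, mul_assoc, mul_inv_cancel₀ hCqpos.ne', mul_one]
    rw [hval] at hmul
    refine Tendsto.congr' ?_ hmul
    filter_upwards [Ioo_mem_nhdsGT_of_mem (Set.left_mem_Ico.2 hX)] with h hh
    have hF := hFpos h ⟨hh.1, hh.2.le⟩
    have hhq : (0:ℝ) < h ^ ((m+1)/m) := Real.rpow_pos_of_pos hh.1 _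
    rw [hsol h ⟨hh.1.le, hh.2.le⟩, Real.mul_rpow hC.le hh.1.le]
    field_simp
  have T_y : Tendsto (fun h => y h / (C * h) ^ (1/m)) (𝓝[>] (0:ℝ)) (𝓝 (p ^ (1/m))) := by
    have base := T_u.rpow_const (p := 1/(m+1)) (Or.inr (by positivity))
    have hlim : (p ^ ((m+1)/m)) ^ (1/(m+1)) = p ^ (1/m) := by
      rw [← Real.rpow_mul hp.le]
      have hexp : (m+1)/m * (1/(m+1)) = 1/m := by field_simp
      rw [hexp]
    rw [hlim] at base
    refine Tendsto.congr' ?_ base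
    filter_upwards [Ioo_mem_nhdsGT_of_mem (Set.left_mem_Ico.2 hX)] with h hh
    have hyh : 0 < y h := hypos h ⟨hh.1, hh.2.le⟩
    have hCh : 0 < C * h := mul_pos hC hh.1
    have hyval : (y h ^ (m+1)) ^ (1/(m+1)) = y h := by
      rw [← Real.rpow_mul hyh.le, mul_one_div_cancel (ne_of_gt hm1), Real.rpow_one]
    rw [Real.div_rpow (Real.rpow_nonneg hyh.le _) (Real.rpow_nonneg hCh.le _),
      hyval, ← Real.rpow_mul hCh.le]
    have hexp2 : (m+1)/m * (1/(m+1)) = 1/m := by field_simp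
    rw [hexp2]
  -- limit of the starting-value ratio
  have T_A : Tendsto (fun h => (∫ t in (0:ℝ)..h, K h t) ^ (1/m) / (C * h) ^ (1/m))
      (𝓝[>] (0:ℝ)) (𝓝 1) := by
    have T_r : Tendsto (fun h => (∫ t in (0:ℝ)..h, K h t) / (C * h)) (𝓝[>] (0:ℝ)) (𝓝 1) := by
      rw [tendsto_order]
      constructor
      · intro l hl
        obtain ⟨δ, hδ0, hδX, hB⟩ := bounds (C * (1 - l)/2) (by nlinarith)
        filter_upwards [Ioo_mem_nhdsGT_of_mem (Set.left_mem_Ico.2 hδ0)] with h hh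
        have hCh : 0 < C * h := mul_pos hC hh.1
        have h1 := (hB h hh.1 hh.2).1.1
        rw [lt_div_iff₀ hCh]
        nlinarith [hh.1]
      · intro u hu
        obtain ⟨δ, hδ0, hδX, hB⟩ := bounds (C * (u - 1)/2) (by nlinarith)
        filter_upwards [Ioo_mem_nhdsGT_of_mem (Set.left_mem_Ico.2 hδ0)] with h hh
        have hCh : 0 < C * h := mul_pos hC hh.1
        have h1 := (hB h hh.1 hh.2).1.2
        rw [div_lt_iff₀ hCh]
        nlinarith [hh.1]
    have base := T_r.rpow_const (p := 1/m) (Or.inr (by positivity))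
    rw [Real.one_rpow] at base
    refine Tendsto.congr' ?_ base
    filter_upwards [Ioo_mem_nhdsGT_of_mem (Set.left_mem_Ico.2 hX)] with h hh
    have hIK : 0 ≤ ∫ t in (0:ℝ)..h, K h t :=
      intervalIntegral.integral_nonneg hh.1.le
        (fun t ht => (hKpos h ⟨hh.1.le, hh.2.le⟩ t ⟨ht.1, ht.2.trans hh.2.le⟩).le)
    rw [Real.div_rpow hIK (mul_nonneg hC.le hh.1.le)]
  have := T_A.sub T_y
  refine this.congr fun h => ?_
  rw [sub_div]
end

section
/- Let m ≥ 1 and h > 0. Then 0 ≤ h·(h/2)^{1/m} − ∫_0^h t^{1/m} dt ≤ (h/2) · h^{1/m}; in particular the local consistency error of the midpoint rule applied to t ↦ t^{1/m} on [0,h] is nonnegative and of order h^{1+1/m}. -/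
open Real Set intervalIntegral

/-- the local consistency error of the midpoint rule applied to
`t ↦ t^(1/m)` on `[0,h]` is nonnegative and bounded by `(h/2) * h^(1/m)`. -/
theorem stmt15
    (m h : ℝ) (hm : 1 ≤ m) (hh : 0 < h) :
    0 ≤ h * (h / 2) ^ (1 / m) - ∫ t in (0 : ℝ)..h, t ^ (1 / m) ∧
    h * (h / 2) ^ (1 / m) - (∫ t in (0 : ℝ)..h, t ^ (1 / m)) ≤ (h / 2) * h ^ (1 / m) := by
  set p : ℝ := 1 / m with hp
  have hm0 : (0:ℝ) < m := lt_of_lt_of_le one_pos hm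
  have hp0 : 0 < p := by positivity
  have hp1 : p ≤ 1 := by
    rw [hp, div_le_one hm0]; exact hm
  have hint : (∫ t in (0:ℝ)..h, t ^ p) = h ^ (p + 1) / (p + 1) := by
    rw [integral_rpow (Or.inl (by linarith : (-1:ℝ) < p))]
    rw [Real.zero_rpow (by linarith : p + 1 ≠ 0)]
    ring
  have hmid : h * (h / 2) ^ p = h ^ (p + 1) / 2 ^ p := by
    rw [Real.div_rpow hh.le (by norm_num : (0:ℝ) ≤ 2),
      Real.rpow_add hh, Real.rpow_one]
    ring
  have h2p : (2:ℝ) ^ p ≤ p + 1 := by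
    have := rpow_one_add_le_one_add_mul_self (s := 1) (by norm_num) hp0.le hp1
    norm_num at this
    linarith [this]
  have h2p1 : (1:ℝ) ≤ (2:ℝ) ^ p := Real.one_le_rpow (by norm_num) hp0.le
  have h2ppos : (0:ℝ) < 2 ^ p := by positivity
  have hhp : (0:ℝ) < h ^ (p + 1) := Real.rpow_pos_of_pos hh _
  constructor
  · rw [hint, hmid, sub_nonneg]
    exact div_le_div_of_nonneg_left hhp.le h2ppos h2p
  · rw [hint, hmid]
    have h1 : h ^ (p + 1) / 2 ^ p ≤ h ^ (p + 1) := by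
      rw [div_le_iff₀ h2ppos]
      nlinarith
    have h2 : h ^ (p + 1) / 2 ≤ h ^ (p + 1) / (p + 1) := by
      apply div_le_div_of_nonneg_left hhp.le (by linarith) (by linarith)
    have hhh : (h / 2) * h ^ p = h ^ (p + 1) / 2 := by
      rw [Real.rpow_add hh, Real.rpow_one]; ring
    rw [hhh]
    linarith
end

section
/- For every real A with 0 < A < 1, the value ζ(1−A) of the Riemann zeta function at the real point 1−A ∈ (0,1) is real and satisfies −1 < A·ζ(1−A) < 0. -/
open Real Complex

noncomputable section
namespace Stmt16
open MeasureTheory intervalIntegral Set Filter Topology ZetaAsymptotics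


/-- Complex version of `ZetaAsymptotics.term`. -/
def termC (n : ℕ) (s : ℂ) : ℂ :=
  ∫ x in (n : ℝ)..((n : ℝ) + 1), ((x : ℂ) - (n : ℂ)) * Complex.exp (-(s + 1) * (Real.log x : ℂ))

def TT (s : ℂ) : ℂ := ∑' n : ℕ, termC (n + 1) s

def HH (s : ℂ) : ℂ := s - s * (s - 1) * TT s

def FF (s : ℂ) : ℂ :=
  ((s - 1) * completedRiemannZeta₀ s - (s - 1) / s + 1) * (Complex.Gammaℝ s)⁻¹

lemma continuousOn_log' {a b : ℝ} (ha : 0 < a) :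
    ContinuousOn (fun x : ℝ => (Real.log x : ℂ)) (Set.Icc a b) :=
  Complex.continuous_ofReal.comp_continuousOn <|
    Real.continuousOn_log.mono (fun x hx => by
      simp only [Set.mem_compl_iff, Set.mem_singleton_iff]
      intro h; rw [h] at hx; exact absurd hx.1 (by linarith))

lemma continuousOn_integrand (n : ℕ) (hn : 1 ≤ n) (s : ℂ) :
    ContinuousOn (fun x : ℝ => ((x : ℂ) - (n : ℂ)) * Complex.exp (-(s + 1) * (Real.log x : ℂ)))
      (Set.uIcc (n : ℝ) ((n : ℝ) + 1)) := by
  have h1 : (1:ℝ) ≤ (n:ℝ) := by exact_mod_cast hn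
  rw [Set.uIcc_of_le (by linarith)]
  exact (by fun_prop : ContinuousOn (fun x : ℝ => ((x:ℂ) - (n:ℂ))) _).mul
    (Complex.continuous_exp.comp_continuousOn
      ((continuousOn_const.mul (continuousOn_log' (by linarith)))))

lemma integrable_integrand (n : ℕ) (hn : 1 ≤ n) (s : ℂ) :
    IntervalIntegrable (fun x : ℝ => ((x : ℂ) - (n : ℂ)) * Complex.exp (-(s + 1) * (Real.log x : ℂ)))
      volume (n : ℝ) ((n : ℝ) + 1) :=
  (continuousOn_integrand n hn s).intervalIntegrable

lemma norm_integrand (n : ℕ) (s : ℂ) (x : ℝ) :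
    ‖((x : ℂ) - (n : ℂ)) * Complex.exp (-(s + 1) * (Real.log x : ℂ))‖
      = |x - n| * Real.exp (-(s.re + 1) * Real.log x) := by
  rw [norm_mul, Complex.norm_exp]
  congr 1
  · rw [← Complex.ofReal_natCast, ← Complex.ofReal_sub, Complex.norm_real, Real.norm_eq_abs]
  · congr 1
    simp [Complex.mul_re]

lemma norm_termC_le {n : ℕ} (hn : 1 ≤ n) {δ : ℝ} (hδ : 0 < δ) {s : ℂ} (hs : δ ≤ s.re) :
    ‖termC n s‖ ≤ (n : ℝ) ^ (-(δ + 1)) := by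
  have h1 : (1:ℝ) ≤ (n:ℝ) := by exact_mod_cast hn
  have := intervalIntegral.norm_integral_le_of_norm_le_const
    (C := (n : ℝ) ^ (-(δ + 1)))
    (f := fun x : ℝ => ((x : ℂ) - (n : ℂ)) * Complex.exp (-(s + 1) * (Real.log x : ℂ)))
    (a := (n : ℝ)) (b := (n : ℝ) + 1) ?_
  · rw [termC]
    refine le_trans this (le_of_eq ?_)
    simp
  · intro x hx
    rw [Set.uIoc_of_le (by linarith)] at hx
    have hx1 : (n : ℝ) < x := hx.1
    have hx2 : x ≤ (n : ℝ) + 1 := hx.2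
    have hlogn : 0 ≤ Real.log (n : ℝ) := Real.log_nonneg h1
    have hlogx : Real.log (n : ℝ) ≤ Real.log x := Real.log_le_log (by linarith) hx1.le
    rw [norm_integrand]
    have h2 : Real.exp (-(s.re + 1) * Real.log x) ≤ (n : ℝ) ^ (-(δ + 1)) := by
      rw [Real.rpow_def_of_pos (by linarith), mul_comm (Real.log _)]
      apply Real.exp_le_exp.mpr
      have : -(s.re + 1) ≤ -(δ + 1) := by linarith
      calc -(s.re + 1) * Real.log x ≤ -(δ + 1) * Real.log x := by
            apply mul_le_mul_of_nonneg_right this (by linarith)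
        _ ≤ -(δ + 1) * Real.log (n : ℝ) := by
            apply mul_le_mul_of_nonpos_left hlogx (by linarith)
    calc |x - n| * Real.exp (-(s.re + 1) * Real.log x)
        ≤ 1 * ((n : ℝ) ^ (-(δ + 1))) := by
          apply mul_le_mul (by rw [_root_.abs_of_nonneg (by linarith : (0:ℝ) ≤ x - n)]; linarith) h2
            (Real.exp_nonneg _) zero_le_one
      _ = (n : ℝ) ^ (-(δ + 1)) := one_mul _

lemma termC_ofReal {n : ℕ} (hn : 1 ≤ n) (σ : ℝ) :
    termC n (σ : ℂ) = ((ZetaAsymptotics.term n σ : ℝ) : ℂ) := by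
  have h1 : (1:ℝ) ≤ (n:ℝ) := by exact_mod_cast hn
  rw [ZetaAsymptotics.term, ← intervalIntegral.integral_ofReal]
  refine intervalIntegral.integral_congr (fun x hx => ?_)
  rw [Set.uIcc_of_le (by linarith)] at hx
  have hx0 : 0 < x := by linarith [hx.1]
  have hr : (x - n) * Real.exp (-(σ + 1) * Real.log x) = (x - n) / x ^ (σ + 1) := by
    rw [Real.rpow_def_of_pos hx0, div_eq_mul_inv, ← Real.exp_neg]
    ring_nf
  rw [← hr]
  push_cast [Complex.ofReal_exp]
  ring_nf

lemma measurable_integrand' (n : ℕ) (s : ℂ) :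
    Measurable (fun x : ℝ =>
      ((x : ℂ) - (n : ℂ)) * (-(Real.log x : ℂ)) * Complex.exp (-(s + 1) * (Real.log x : ℂ))) := by
  have hl : Measurable fun x : ℝ => (Real.log x : ℂ) :=
    Complex.measurable_ofReal.comp Real.measurable_log
  exact ((Complex.measurable_ofReal.sub measurable_const).mul hl.neg).mul
    (Complex.measurable_exp.comp (measurable_const.mul hl))

lemma hasDerivAt_termC (n : ℕ) (hn : 1 ≤ n) (s₀ : ℂ) :
    HasDerivAt (fun s => termC n s)
      (∫ x in (n : ℝ)..((n : ℝ) + 1),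
        ((x : ℂ) - (n : ℂ)) * (-(Real.log x : ℂ)) * Complex.exp (-(s₀ + 1) * (Real.log x : ℂ))) s₀ := by
  have h1 : (1:ℝ) ≤ (n:ℝ) := by exact_mod_cast hn
  set C : ℝ := Real.log ((n : ℝ) + 1) * Real.exp ((|s₀.re| + 2) * Real.log ((n : ℝ) + 1)) with hC
  have key := intervalIntegral.hasDerivAt_integral_of_dominated_loc_of_deriv_le
    (F := fun s x => ((x : ℂ) - (n : ℂ)) * Complex.exp (-(s + 1) * (Real.log x : ℂ)))
    (F' := fun s x => ((x : ℂ) - (n : ℂ)) * (-(Real.log x : ℂ)) * Complex.exp (-(s + 1) * (Real.log x : ℂ)))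
    (x₀ := s₀) (a := (n : ℝ)) (b := (n : ℝ) + 1) (μ := volume) (bound := fun _ => C)
    (s := Metric.ball s₀ 1) (Metric.ball_mem_nhds s₀ one_pos) ?_ (integrable_integrand n hn s₀) ?_ ?_ ?_ ?_
  · exact key.2
  · -- measurability of F s
    filter_upwards with s
    have hl : Measurable fun x : ℝ => (Real.log x : ℂ) :=
      Complex.measurable_ofReal.comp Real.measurable_log
    exact (((Complex.measurable_ofReal.sub measurable_const).mul
      (Complex.measurable_exp.comp (measurable_const.mul hl))).aestronglyMeasurable)
  · exact (measurable_integrand' n s₀).aestronglyMeasurable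
  · -- bound
    filter_upwards with x hx s hs
    rw [Set.uIoc_of_le (by linarith)] at hx
    have hx1 : (n:ℝ) < x := hx.1
    have hx2 : x ≤ (n:ℝ) + 1 := hx.2
    have hlogx0 : 0 ≤ Real.log x := Real.log_nonneg (by linarith)
    have hlogx : Real.log x ≤ Real.log ((n:ℝ) + 1) := Real.log_le_log (by linarith) hx2
    have hre : |s.re| ≤ |s₀.re| + 1 := by
      have : ‖s - s₀‖ < 1 := by simpa [Metric.mem_ball, dist_eq_norm] using hs
      have h2 : |s.re - s₀.re| ≤ ‖s - s₀‖ := by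
        simpa using Complex.abs_re_le_norm (s - s₀)
      have := abs_sub_abs_le_abs_sub s.re s₀.re
      linarith
    rw [norm_mul, norm_mul]
    have e1 : ‖(x:ℂ) - (n:ℂ)‖ ≤ 1 := by
      rw [← Complex.ofReal_natCast, ← Complex.ofReal_sub, Complex.norm_real, Real.norm_eq_abs,
        _root_.abs_of_nonneg (by linarith : (0:ℝ) ≤ x - n)]
      linarith
    have e2 : ‖(-(Real.log x : ℂ))‖ ≤ Real.log ((n:ℝ) + 1) := by
      rw [norm_neg, Complex.norm_real, Real.norm_eq_abs, _root_.abs_of_nonneg hlogx0]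
      exact hlogx
    have e3 : ‖Complex.exp (-(s + 1) * (Real.log x : ℂ))‖
        ≤ Real.exp ((|s₀.re| + 2) * Real.log ((n:ℝ) + 1)) := by
      rw [Complex.norm_exp]
      apply Real.exp_le_exp.mpr
      have hre2 : (-(s + 1) * (Real.log x : ℂ)).re = -(s.re + 1) * Real.log x := by
        simp [Complex.mul_re]
      rw [hre2]
      calc -(s.re + 1) * Real.log x ≤ |(-(s.re + 1))| * Real.log x :=
            mul_le_mul_of_nonneg_right (le_abs_self _) hlogx0
        _ ≤ (|s₀.re| + 2) * Real.log x := by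
            apply mul_le_mul_of_nonneg_right _ hlogx0
            calc |(-(s.re + 1))| ≤ |s.re| + 1 := by
                  rw [abs_neg]; exact (abs_add_le _ _).trans (by simp)
              _ ≤ |s₀.re| + 2 := by linarith
        _ ≤ (|s₀.re| + 2) * Real.log ((n:ℝ) + 1) := by
            apply mul_le_mul_of_nonneg_left hlogx (by positivity)
    calc ‖(x:ℂ) - (n:ℂ)‖ * ‖(-(Real.log x : ℂ))‖ * ‖Complex.exp (-(s + 1) * (Real.log x : ℂ))‖
        ≤ 1 * Real.log ((n:ℝ) + 1) * Real.exp ((|s₀.re| + 2) * Real.log ((n:ℝ) + 1)) := by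
          apply mul_le_mul (mul_le_mul e1 e2 (norm_nonneg _) zero_le_one) e3 (norm_nonneg _)
          have : (0:ℝ) ≤ Real.log ((n:ℝ) + 1) := Real.log_nonneg (by linarith)
          positivity
      _ = C := by rw [hC]; ring
  · exact intervalIntegrable_const
  · -- differentiability
    filter_upwards with x hx s hs
    have hd : HasDerivAt (fun s : ℂ => -(s + 1) * (Real.log x : ℂ)) (-(Real.log x : ℂ)) s := by
      have := (((hasDerivAt_id s).add_const (1:ℂ)).neg).mul_const (Real.log x : ℂ)
      simpa using this
    have := hd.cexp
    have := this.const_mul ((x:ℂ) - (n:ℂ))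
    exact this.congr_deriv (by ring)

lemma summable_aux {δ : ℝ} (hδ : 0 < δ) :
    Summable (fun n : ℕ => ((n + 1 : ℕ) : ℝ) ^ (-(δ + 1))) := by
  have : Summable (fun n : ℕ => ((n : ℕ) : ℝ) ^ (-(δ + 1))) :=
    Real.summable_nat_rpow.mpr (by linarith)
  exact (summable_nat_add_iff 1).mpr this

lemma differentiableAt_TT {s₀ : ℂ} (hs₀ : 0 < s₀.re) : DifferentiableAt ℂ TT s₀ := by
  set δ := s₀.re / 2 with hδdef
  have hδ : 0 < δ := by positivity
  have hU : IsOpen {s : ℂ | δ < s.re} := isOpen_lt continuous_const Complex.continuous_re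
  have hdo : DifferentiableOn ℂ TT {s : ℂ | δ < s.re} := by
    apply differentiableOn_tsum_of_summable_norm (summable_aux hδ)
    · intro n s hs
      exact ((hasDerivAt_termC (n + 1) (Nat.le_add_left 1 n) s).differentiableAt).differentiableWithinAt
    · exact hU
    · intro n w hw
      exact norm_termC_le (Nat.le_add_left 1 n) hδ (le_of_lt hw)
  exact hdo.differentiableAt (hU.mem_nhds (by simp only [Set.mem_setOf_eq]; linarith))

lemma differentiableOn_HH : DifferentiableOn ℂ HH {s : ℂ | 0 < s.re} := by
  intro s hs
  apply DifferentiableAt.differentiableWithinAt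
  exact (differentiableAt_id.sub
    ((differentiableAt_id.mul (differentiableAt_id.sub_const 1)).mul (differentiableAt_TT hs)))

lemma differentiableOn_FF : DifferentiableOn ℂ FF {s : ℂ | 0 < s.re} := by
  intro s hs
  have hs0 : s ≠ 0 := by
    intro h; rw [h] at hs; simp at hs
  apply DifferentiableAt.differentiableWithinAt
  refine DifferentiableAt.mul ?_ (differentiable_Gammaℝ_inv.differentiableAt)
  refine DifferentiableAt.add_const 1 ?_
  refine DifferentiableAt.sub ?_ ?_
  · exact (differentiableAt_id.sub_const 1).mul (differentiable_completedZeta₀.differentiableAt)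
  · exact (differentiableAt_id.sub_const 1).div differentiableAt_id hs0

lemma FF_eq {s : ℂ} (hs0 : s ≠ 0) (hs1 : s ≠ 1) :
    FF s = (s - 1) * riemannZeta s := by
  have h1s : (1:ℂ) - s ≠ 0 := fun h => hs1 (sub_eq_zero.mp h).symm
  have hnum : (s - 1) * completedRiemannZeta₀ s - (s - 1) / s + 1
      = (s - 1) * (completedRiemannZeta₀ s - 1 / s - 1 / (1 - s)) := by
    field_simp
    ring
  rw [FF, riemannZeta_def_of_ne_zero hs0, completedRiemannZeta_eq, hnum, div_eq_mul_inv]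
  ring

lemma integral_rpow_aux {σ : ℝ} (hσ : 0 < σ) {a : ℝ} (ha : 1 ≤ a) :
    ∫ x in a..(a + 1), x ^ (-(σ + 1)) = (a ^ (-σ) - (a + 1) ^ (-σ)) / σ := by
  have h0 : (0:ℝ) ∉ Set.uIcc a (a + 1) := by
    rw [Set.uIcc_of_le (by linarith)]
    intro h
    exact absurd h.1 (by linarith)
  rw [integral_rpow (Or.inr ⟨by intro h; linarith, h0⟩)]
  rw [show (-(σ+1)+1) = -σ by ring, div_neg, ← neg_div, neg_sub]

lemma intervalIntegrable_rpow_aux (σ : ℝ) {a : ℝ} (ha : 1 ≤ a) :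
    IntervalIntegrable (fun x : ℝ => x ^ (-(σ + 1))) volume a (a + 1) := by
  apply intervalIntegral.intervalIntegrable_rpow
  right
  rw [Set.uIcc_of_le (by linarith)]
  intro h
  exact absurd h.1 (by linarith)

lemma term_le {σ : ℝ} (hσ : 0 < σ) {n : ℕ} (hn : 1 ≤ n) :
    ZetaAsymptotics.term n σ ≤ ((n:ℝ) ^ (-σ) - ((n:ℝ) + 1) ^ (-σ)) / σ := by
  have h1 : (1:ℝ) ≤ (n:ℝ) := by exact_mod_cast hn
  rw [← integral_rpow_aux hσ h1, ZetaAsymptotics.term]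
  apply intervalIntegral.integral_mono_on (by linarith)
    (ZetaAsymptotics.term_welldef (by omega) hσ) (intervalIntegrable_rpow_aux σ h1)
  intro x hx
  have hx1 : (n:ℝ) ≤ x := hx.1
  have hx2 : x ≤ (n:ℝ) + 1 := hx.2
  have hx0 : 0 < x := by linarith
  rw [Real.rpow_neg hx0.le, ← one_div]
  have hd : (0:ℝ) < x ^ (σ + 1) := Real.rpow_pos_of_pos hx0 _
  gcongr
  linarith

lemma term_one_lt {σ : ℝ} (hσ : 0 < σ) :
    ZetaAsymptotics.term 1 σ < ((1:ℝ) ^ (-σ) - (2:ℝ) ^ (-σ)) / σ := by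
  have e0 : ZetaAsymptotics.term 1 σ = ∫ x in (1:ℝ)..2, (x - 1) / x ^ (σ + 1) := by
    rw [ZetaAsymptotics.term]
    push_cast
    norm_num
  have hint : ∫ x in (1:ℝ)..(2:ℝ), x ^ (-(σ + 1)) = ((1:ℝ) ^ (-σ) - (2:ℝ) ^ (-σ)) / σ := by
    have := integral_rpow_aux hσ (le_refl (1:ℝ))
    norm_num at this ⊢
    convert this using 2 <;> norm_num
  rw [e0, ← hint]
  have h2 : IntervalIntegrable (fun x : ℝ => (x - 1) / x ^ (σ + 1)) volume 1 2 := by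
    have := ZetaAsymptotics.term_welldef (n := 1) one_pos hσ
    push_cast at this
    convert this using 2
    norm_num
  have h3 : IntervalIntegrable (fun x : ℝ => x ^ (-(σ + 1))) volume 1 2 := by
    have := intervalIntegrable_rpow_aux σ (le_refl (1:ℝ))
    norm_num at this
    convert this using 2
    ring
  have key : 0 < ∫ x in (1:ℝ)..(2:ℝ), (x ^ (-(σ + 1)) - (x - 1) / x ^ (σ + 1)) := by
    apply intervalIntegral.intervalIntegral_pos_of_pos_on (h3.sub h2) _ (by norm_num)
    intro x hx
    have hx0 : (0:ℝ) < x := by linarith [hx.1]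
    rw [Real.rpow_neg hx0.le, ← one_div]
    rw [sub_pos, div_lt_div_iff₀ (by positivity) (by positivity)]
    nlinarith [Real.rpow_pos_of_pos hx0 (σ + 1), hx.2]
  rw [intervalIntegral.integral_sub h3 h2] at key
  linarith

/-- the telescoping bound sequence -/
def bseq (σ : ℝ) (n : ℕ) : ℝ := (((n:ℝ) + 1) ^ (-σ) - ((n:ℝ) + 2) ^ (-σ)) / σ

lemma bseq_nonneg {σ : ℝ} (hσ : 0 < σ) (n : ℕ) : 0 ≤ bseq σ n := by
  apply div_nonneg _ hσ.le
  rw [sub_nonneg]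
  apply Real.rpow_le_rpow_of_nonpos (by positivity) (by linarith) (by linarith)

lemma hasSum_bseq {σ : ℝ} (hσ : 0 < σ) : HasSum (bseq σ) (1 / σ) := by
  rw [hasSum_iff_tendsto_nat_of_nonneg (bseq_nonneg hσ)]
  have hsum : ∀ N : ℕ, ∑ n ∈ Finset.range N, bseq σ n = (1 - ((N:ℝ) + 1) ^ (-σ)) / σ := by
    intro N
    have := Finset.sum_range_sub' (fun n : ℕ => ((n:ℝ) + 1) ^ (-σ) / σ) N
    simp only [bseq]
    calc ∑ n ∈ Finset.range N, (((n:ℝ) + 1) ^ (-σ) - ((n:ℝ) + 2) ^ (-σ)) / σ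
        = ∑ n ∈ Finset.range N, (((n:ℝ) + 1) ^ (-σ) / σ - (((n:ℝ) + 1) + 1) ^ (-σ) / σ) := by
          apply Finset.sum_congr rfl
          intro n _
          push_cast
          ring_nf
      _ = ((0:ℝ) + 1) ^ (-σ) / σ - ((N:ℝ) + 1) ^ (-σ) / σ := by
          rw [show ((0:ℝ) + 1) ^ (-σ) / σ - ((N:ℝ) + 1) ^ (-σ) / σ
              = ((((0:ℕ):ℝ)) + 1) ^ (-σ) / σ - ((N:ℝ) + 1) ^ (-σ) / σ by norm_num, ← this]
          apply Finset.sum_congr rfl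
          intro n _
          push_cast
          ring_nf
      _ = (1 - ((N:ℝ) + 1) ^ (-σ)) / σ := by
          rw [zero_add, Real.one_rpow]
          ring
  simp_rw [hsum]
  have h1 : Tendsto (fun N : ℕ => ((N:ℝ) + 1) ^ (-σ)) atTop (𝓝 0) := by
    apply (tendsto_rpow_neg_atTop hσ).comp
    exact tendsto_atTop_add_const_right _ 1 tendsto_natCast_atTop_atTop
  have := ((tendsto_const_nhds (x := (1:ℝ))).sub h1).div_const σ
  simpa using this

lemma summable_term {σ : ℝ} (hσ : 0 < σ) :
    Summable (fun n : ℕ => ZetaAsymptotics.term (n + 1) σ) := by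
  apply Summable.of_nonneg_of_le (fun n => ZetaAsymptotics.term_nonneg _ _) _
    (hasSum_bseq hσ).summable
  intro n
  have := term_le hσ (n := n + 1) (by omega)
  rw [bseq]
  push_cast at this ⊢
  convert this using 3 <;> ring

lemma tsum_term_lt {σ : ℝ} (hσ : 0 < σ) :
    σ * ∑' n : ℕ, ZetaAsymptotics.term (n + 1) σ < 1 := by
  have hlt : (∑' n : ℕ, ZetaAsymptotics.term (n + 1) σ) < 1 / σ := by
    rw [← (hasSum_bseq hσ).tsum_eq]
    apply Summable.tsum_lt_tsum (i := 0) _ _ (summable_term hσ) (hasSum_bseq hσ).summable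
    · intro n
      show ZetaAsymptotics.term (n + 1) σ ≤ bseq σ n
      have := term_le hσ (n := n + 1) (by omega)
      rw [bseq]
      push_cast at this ⊢
      convert this using 3 <;> ring
    · have := term_one_lt hσ
      rw [bseq]
      norm_num at this ⊢
      convert this using 3 <;> norm_num
  calc σ * ∑' n : ℕ, ZetaAsymptotics.term (n + 1) σ < σ * (1 / σ) := by
        exact mul_lt_mul_of_pos_left hlt hσ
    _ = 1 := by field_simp

lemma TT_ofReal (σ : ℝ) :
    TT (σ : ℂ) = ((∑' n : ℕ, ZetaAsymptotics.term (n + 1) σ : ℝ) : ℂ) := by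
  rw [TT, Complex.ofReal_tsum]
  exact tsum_congr fun n => termC_ofReal (by omega) σ

lemma HH_ofReal (σ : ℝ) :
    HH (σ : ℂ) = ((σ - σ * (σ - 1) * ∑' n : ℕ, ZetaAsymptotics.term (n + 1) σ : ℝ) : ℂ) := by
  rw [HH, TT_ofReal]
  push_cast
  ring

lemma key_eq {σ : ℝ} (hσ : 1 < σ) : FF (σ : ℂ) = HH (σ : ℂ) := by
  have hσ0 : (σ:ℂ) ≠ 0 := by
    simp only [ne_eq, Complex.ofReal_eq_zero]
    linarith
  have hσ1 : (σ:ℂ) ≠ 1 := by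
    simp only [ne_eq, ← Complex.ofReal_one, Complex.ofReal_inj]
    linarith
  have hz : riemannZeta (σ : ℂ) = ((∑' n : ℕ, 1 / ((n:ℝ) + 1) ^ σ : ℝ) : ℂ) := by
    rw [zeta_eq_tsum_one_div_nat_add_one_cpow (by simp; linarith), Complex.ofReal_tsum]
    refine tsum_congr fun n => ?_
    rw [Complex.ofReal_div, Complex.ofReal_one, Complex.ofReal_cpow (by positivity)]
    norm_num
  rw [FF_eq hσ0 hσ1, hz, HH_ofReal]
  have aux := ZetaAsymptotics.zeta_limit_aux1 hσ
  rw [ZetaAsymptotics.termTSum] at aux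
  have hne : σ - 1 ≠ 0 := by linarith
  rw [show ((σ:ℂ) - 1) = (((σ - 1 : ℝ)):ℂ) by push_cast; ring, ← Complex.ofReal_mul,
    Complex.ofReal_inj]
  field_simp at aux
  nlinarith [aux]

lemma FF_eq_HH {s : ℂ} (hs : 0 < s.re) : FF s = HH s := by
  have hU : IsOpen {s : ℂ | 0 < s.re} := isOpen_lt continuous_const Complex.continuous_re
  have hFa : AnalyticOnNhd ℂ FF {s : ℂ | 0 < s.re} := differentiableOn_FF.analyticOnNhd hU
  have hHa : AnalyticOnNhd ℂ HH {s : ℂ | 0 < s.re} := differentiableOn_HH.analyticOnNhd hU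
  have hpre : IsPreconnected {s : ℂ | 0 < s.re} := (convex_halfSpace_re_gt 0).isPreconnected
  have h2 : (2:ℂ) ∈ {s : ℂ | 0 < s.re} := by norm_num
  have hfreq : ∃ᶠ z in 𝓝[≠] (2:ℂ), FF z = HH z := by
    have htend : Tendsto (fun k : ℕ => ((2 + 1 / ((k:ℝ) + 1) : ℝ) : ℂ)) atTop (𝓝[≠] (2:ℂ)) := by
      apply tendsto_nhdsWithin_of_tendsto_nhds_of_eventually_within
      · have : Tendsto (fun k : ℕ => (2 + 1 / ((k:ℝ) + 1) : ℝ)) atTop (𝓝 2) := by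
          have := tendsto_one_div_add_atTop_nhds_zero_nat (𝕜 := ℝ)
          have h := (tendsto_const_nhds (x := (2:ℝ))).add this
          simpa using h
        have h2' := (Complex.continuous_ofReal.tendsto 2).comp this
        rw [show ((2:ℝ):ℂ) = (2:ℂ) by norm_num] at h2'
        exact h2'
      · filter_upwards with k
        simp only [Set.mem_compl_iff, Set.mem_singleton_iff]
        intro h
        rw [show (2:ℂ) = ((2:ℝ):ℂ) by norm_num, Complex.ofReal_inj] at h
        have : 0 < 1 / ((k:ℝ) + 1) := by positivity
        linarith
    apply Filter.Tendsto.frequently (p := fun z => FF z = HH z) htend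
    apply Filter.Eventually.frequently
    filter_upwards with k
    apply key_eq
    have : 0 < 1 / ((k:ℝ) + 1) := by positivity
    linarith
  exact hFa.eqOn_of_preconnected_of_frequently_eq hHa hpre h2 hfreq hs

end Stmt16


/-- for `0 < A < 1`, the Riemann zeta value `ζ(1 - A)` is real and
satisfies `-1 < A * ζ(1 - A) < 0`. -/
theorem stmt16
    (A : ℝ) (hA0 : 0 < A) (hA1 : A < 1) :
    (riemannZeta (1 - (A : ℂ))).im = 0 ∧
    -1 < A * (riemannZeta (1 - (A : ℂ))).re ∧
    A * (riemannZeta (1 - (A : ℂ))).re < 0 := by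
  set σ : ℝ := 1 - A with hσdef
  have hσ0 : 0 < σ := by simp [hσdef]; linarith
  have hσ1 : σ < 1 := by simp [hσdef]; linarith
  set t : ℝ := ∑' n : ℕ, ZetaAsymptotics.term (n + 1) σ with ht
  have ht0 : 0 ≤ t := tsum_nonneg fun n => ZetaAsymptotics.term_nonneg _ _
  have ht1 : σ * t < 1 := Stmt16.tsum_term_lt hσ0
  have hcast : (1 - (A : ℂ)) = ((σ : ℝ) : ℂ) := by rw [hσdef]; push_cast; ring
  have hs0 : ((σ:ℝ):ℂ) ≠ 0 := by
    simp only [ne_eq, Complex.ofReal_eq_zero]; linarith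
  have hs1 : ((σ:ℝ):ℂ) ≠ 1 := by
    simp only [ne_eq, ← Complex.ofReal_one, Complex.ofReal_inj]; linarith
  have hre : (0:ℝ) < (((σ:ℝ)):ℂ).re := by simpa using hσ0
  have hmain : (((σ:ℝ):ℂ) - 1) * riemannZeta ((σ:ℝ):ℂ)
      = ((σ - σ * (σ - 1) * t : ℝ) : ℂ) := by
    rw [← Stmt16.FF_eq hs0 hs1, Stmt16.FF_eq_HH hre, Stmt16.HH_ofReal]
  rw [hcast]
  set z : ℂ := riemannZeta ((σ:ℝ):ℂ) with hz
  have hre' : (σ - 1) * z.re = σ - σ * (σ - 1) * t := by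
    have := congrArg Complex.re hmain
    simpa [Complex.sub_re, Complex.mul_re, Complex.ofReal_re, Complex.ofReal_im] using this
  have him' : (σ - 1) * z.im = 0 := by
    have := congrArg Complex.im hmain
    simpa [Complex.mul_im, Complex.ofReal_re, Complex.ofReal_im] using this
  have hσne : σ - 1 ≠ 0 := by linarith
  have him : z.im = 0 := by
    rcases mul_eq_zero.mp him' with h | h
    · exact absurd h hσne
    · exact h
  have hAz : A * z.re = -σ - σ * A * t := by
    have hA : A = 1 - σ := by rw [hσdef]; ring
    have : z.re = (σ - σ * (σ - 1) * t) / (σ - 1) := by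
      field_simp at hre' ⊢
      linarith [hre']
    rw [this, hA]
    field_simp
    ring
  refine ⟨him, ?_, ?_⟩
  · rw [hAz]
    have hAt : σ * A * t < A := by
      rcases eq_or_lt_of_le ht0 with h | h
      · rw [← h]; simpa using hA0
      · calc σ * A * t = A * (σ * t) := by ring
          _ < A * 1 := by exact mul_lt_mul_of_pos_left ht1 hA0
          _ = A := mul_one A
    linarith
  · rw [hAz]
    nlinarith
end
end

section
/- Let m > 0, X > 0, and let g : [0,X] → ℝ be continuous and positive. Define z : [0,X] → ℝ by z(x) := ((m/(m+1)) · ∫_0^x g(t)^{1/(m+1)} dt)^{(m+1)/m}. Then z(0) = 0, z is differentiable on (0,X), and z'(x) = (g(x) · z(x))^{1/(m+1)} for all x ∈ (0,X). -/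
open Real Set intervalIntegral

/-- closed-form solution of the separable ODE
`z' = (g z)^(1/(m+1))` with `z 0 = 0`. -/
theorem stmt17
    (m X : ℝ) (hm : 0 < m) (hX : 0 < X)
    (g : ℝ → ℝ)
    (hgcont : ContinuousOn g (Set.Icc 0 X))
    (hgpos : ∀ x ∈ Set.Icc (0 : ℝ) X, 0 < g x)
    (z : ℝ → ℝ)
    (hz : ∀ x : ℝ, z x =
      ((m / (m + 1)) * ∫ t in (0 : ℝ)..x, g t ^ (1 / (m + 1))) ^ ((m + 1) / m)) :
    z 0 = 0 ∧ ∀ x ∈ Set.Ioo (0 : ℝ) X, HasDerivAt z ((g x * z x) ^ (1 / (m + 1))) x := by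
  have hm1 : (0:ℝ) < m + 1 := by linarith
  have hp : (m + 1) / m ≠ 0 := by positivity
  set h : ℝ → ℝ := fun t => g t ^ (1 / (m + 1)) with hh
  have hcontIcc : ContinuousOn h (Icc 0 X) :=
    hgcont.rpow_const (fun t ht => Or.inl (hgpos t ht).ne')
  constructor
  · rw [hz 0]
    simp [Real.zero_rpow hp]
  · intro x hx
    obtain ⟨hx0, hxX⟩ := hx
    have hIccsub : Icc (0:ℝ) x ⊆ Icc 0 X := Icc_subset_Icc le_rfl hxX.le
    have hInt : IntervalIntegrable h MeasureTheory.volume 0 x := by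
      apply ContinuousOn.intervalIntegrable
      rw [uIcc_of_le hx0.le]
      exact hcontIcc.mono hIccsub
    have hnhds : Icc (0:ℝ) X ∈ nhds x := Icc_mem_nhds (by linarith) hxX
    have hcAt : ContinuousAt h x := hcontIcc.continuousAt hnhds
    have hF : HasDerivAt (fun y => ∫ t in (0:ℝ)..y, h t) (h x) x :=
      intervalIntegral.integral_hasDerivAt_right hInt
        ((hcontIcc.mono Ioo_subset_Icc_self).stronglyMeasurableAtFilter isOpen_Ioo x ⟨hx0, hxX⟩) hcAt
    have hFpos : (0:ℝ) < ∫ t in (0:ℝ)..x, h t := by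
      apply intervalIntegral.intervalIntegral_pos_of_pos_on hInt _ hx0
      intro t ht
      exact Real.rpow_pos_of_pos (hgpos t ⟨ht.1.le, ht.2.le.trans hxX.le⟩) _
    set F : ℝ → ℝ := fun y => ∫ t in (0:ℝ)..y, h t with hFdef
    have hcpos : (0:ℝ) < m / (m + 1) := by positivity
    have hcFpos : (0:ℝ) < (m / (m + 1)) * F x := by positivity
    have hzeq : z = fun y => ((m / (m + 1)) * F y) ^ ((m + 1) / m) := funext hz
    rw [hzeq]
    have hD : HasDerivAt (fun y => ((m / (m + 1)) * F y) ^ ((m + 1) / m))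
        (((m / (m + 1)) * h x) * ((m + 1) / m)
          * ((m / (m + 1)) * F x) ^ ((m + 1) / m - 1)) x :=
      (hF.const_mul (m / (m + 1))).rpow_const (Or.inl hcFpos.ne')
    convert hD using 1
    have hgx : 0 < g x := hgpos x ⟨hx0.le, hxX.le⟩
    have hzx : ((m / (m + 1)) * F x) ^ ((m + 1) / m) > 0 := Real.rpow_pos_of_pos hcFpos _
    rw [Real.mul_rpow hgx.le hzx.le, ← Real.rpow_mul hcFpos.le]
    have e1 : (m + 1) / m * (1 / (m + 1)) = (1 : ℝ) / m := by
      field_simp <;> ring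
    have e2 : (m + 1) / m - 1 = (1 : ℝ) / m := by
      field_simp <;> ring
    rw [e1, e2, hh]
    have e3 : m / (m + 1) * g x ^ (1 / (m + 1)) * ((m + 1) / m)
        = g x ^ (1 / (m + 1)) := by
      field_simp <;> ring
    rw [e3]
end
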